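/- arXiv:0902.1668 — 4 statements merged into one kernel-verified Lean document; each statement's English description precedes it below -/
import Mathlib

section
/- Let G be a nontrivial finite solvable group. Define S(G) to be the intersection of all normal subgroups K of G such that the Fitting height of G/K is strictly less than the Fitting height of G. Then S(G) is nontrivial and S(G) is contained in the Fitting subgroup F(G). -/
/-- `FittingHeightLe n G` says the group `G` has a normal series of length at most `n`
with nilpotent quotients, i.e. Fitting height at most `n`. -/
def FittingHeightLe : ℕ → ∀ (G : Type) [Group G], Prop
  | 0, G, _ => Subsingleton G
  | (n+1), G, _ => ∃ (N : Subgroup G) (hN : N.Normal), Group.IsNilpotent N ∧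
      (letI := hN; FittingHeightLe n (G ⧸ N))

/-- The Fitting height of a group (junk value if no bound exists). -/
noncomputable def fittingHeight (G : Type) [Group G] : ℕ :=
  sInf {n | FittingHeightLe n G}

/-- `SG G` is the intersection of all normal subgroups of `G` whose quotient has
Fitting height strictly smaller than that of `G`. -/
noncomputable def SG (G : Type) [Group G] : Subgroup G :=
  sInf {K : Subgroup G | ∃ hK : K.Normal,
    (letI := hK; fittingHeight (G ⧸ K)) < fittingHeight G}

/-- The Fitting subgroup: the join of all nilpotent normal subgroups. -/
def FittingSub (G : Type) [Group G] : Subgroup G :=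
  ⨆ (N : Subgroup G) (_ : N.Normal) (_ : Group.IsNilpotent N), N

lemma nilpotent_of_injective' {G H : Type} [Group G] [Group H] [Group.IsNilpotent G]
    (f : H →* G) (hf : Function.Injective f) : Group.IsNilpotent H :=
  nilpotent_of_mulEquiv (MonoidHom.ofInjective hf).symm

lemma fhle_of_injective : ∀ (n : ℕ) {G H : Type} [Group G] [Group H] (f : H →* G),
    Function.Injective f → FittingHeightLe n G → FittingHeightLe n H
  | 0, G, H, _, _, f, hf, h => by
      have : Subsingleton G := h
      exact ⟨fun a b => hf (Subsingleton.elim _ _)⟩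
  | (n+1), G, H, _, _, f, hf, ⟨N, hN, hnil, hq⟩ => by
      refine ⟨N.comap f, hN.comap f, ?_, ?_⟩
      · exact nilpotent_of_injective'
          ((f.comp (N.comap f).subtype).codRestrict N (fun x => x.2))
          (fun a b hab => Subtype.ext (hf (Subtype.ext_iff.mp hab)))
      · haveI := hN.comap f
        set φ : H →* G ⧸ N := (QuotientGroup.mk' N).comp f with hφ
        have hker : N.comap f = φ.ker := by
          rw [hφ, ← MonoidHom.comap_ker, QuotientGroup.ker_mk']
        have e : (H ⧸ N.comap f) ≃* (H ⧸ φ.ker) :=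
          QuotientGroup.quotientMulEquivOfEq hker
        exact fhle_of_injective n ((QuotientGroup.kerLift φ).comp e.toMonoidHom)
          ((QuotientGroup.kerLift_injective φ).comp e.injective) hq

lemma fhle_prod : ∀ (n : ℕ) {A B : Type} [Group A] [Group B],
    FittingHeightLe n A → FittingHeightLe n B → FittingHeightLe n (A × B)
  | 0, A, B, _, _, ha, hb => by
      have : Subsingleton A := ha
      have : Subsingleton B := hb
      exact ⟨fun x y => Prod.ext (Subsingleton.elim _ _) (Subsingleton.elim _ _)⟩
  | (n+1), A, B, _, _, ⟨NA, hNA, hnilA, hqA⟩, ⟨NB, hNB, hnilB, hqB⟩ => by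
      haveI := hNA; haveI := hNB
      refine ⟨NA.prod NB, inferInstance, ?_, ?_⟩
      · exact nilpotent_of_mulEquiv (Subgroup.prodEquiv NA NB).symm
      · set φ : A × B →* (A ⧸ NA) × (B ⧸ NB) :=
          (QuotientGroup.mk' NA).prodMap (QuotientGroup.mk' NB) with hφ
        have hker : NA.prod NB = φ.ker := by
          rw [hφ, MonoidHom.ker_prodMap, QuotientGroup.ker_mk', QuotientGroup.ker_mk']
        have e : ((A × B) ⧸ NA.prod NB) ≃* ((A × B) ⧸ φ.ker) :=
          QuotientGroup.quotientMulEquivOfEq hker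
        exact fhle_of_injective n ((QuotientGroup.kerLift φ).comp e.toMonoidHom)
          ((QuotientGroup.kerLift_injective φ).comp e.injective)
          (fhle_prod n hqA hqB)

lemma fhle_of_subsingleton (n : ℕ) {G : Type} [Group G] [Subsingleton G] :
    FittingHeightLe n G := by
  induction n with
  | zero => exact ‹Subsingleton G›
  | succ n ih =>
      refine ⟨⊥, inferInstance, inferInstance, ?_⟩
      exact fhle_of_injective n (QuotientGroup.quotientBot (G := G)).toMonoidHom
        (MulEquiv.injective _) ‹FittingHeightLe n G›

lemma fhle_succ {G : Type} [Group G] {n : ℕ} (h : FittingHeightLe n G) :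
    FittingHeightLe (n+1) G :=
  ⟨⊥, inferInstance, inferInstance,
    fhle_of_injective n (QuotientGroup.quotientBot (G := G)).toMonoidHom
      (MulEquiv.injective _) h⟩

lemma fhle_of_le {G : Type} [Group G] {m n : ℕ} (hmn : m ≤ n)
    (h : FittingHeightLe m G) : FittingHeightLe n G := by
  induction hmn with
  | refl => exact h
  | step _ ih => exact fhle_succ ih

open scoped commutatorElement in
lemma fhle_of_derived : ∀ (n : ℕ) {G : Type} [Group G],
    derivedSeries G n = ⊥ → FittingHeightLe n G
  | 0, G, _, h => by
      have h1 : ∀ g : G, g = 1 := fun g => by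
        have : g ∈ derivedSeries G 0 := Subgroup.mem_top g
        rwa [h, Subgroup.mem_bot] at this
      exact ⟨fun a b => (h1 a).trans (h1 b).symm⟩
  | (n+1), G, _, h => by
      have hcomm : ∀ a b : derivedSeries G n, a * b = b * a := by
        intro a b
        have : ⁅(a : G), (b : G)⁆ ∈ derivedSeries G (n+1) := by
          rw [derivedSeries_succ]
          exact Subgroup.commutator_mem_commutator a.2 b.2
        rw [h, Subgroup.mem_bot, commutatorElement_eq_one_iff_mul_comm] at this
        exact Subtype.ext this
      haveI := derivedSeries_normal (G := G) n
      refine ⟨derivedSeries G n, inferInstance, ?_, ?_⟩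
      · refine ⟨⟨1, ?_⟩⟩
        rw [upperCentralSeries_one, eq_top_iff]
        intro x _
        rw [Subgroup.mem_center_iff]
        intro y
        exact hcomm y x
      have hmap : derivedSeries (G ⧸ derivedSeries G n) n = ⊥ := by
        rw [← map_derivedSeries_eq (QuotientGroup.mk'_surjective (derivedSeries G n)),
          Subgroup.map_eq_bot_iff, QuotientGroup.ker_mk']
      exact fhle_of_derived n hmap

lemma fhle_quot_inf {G : Type} [Group G] (n : ℕ) (K L : Subgroup G)
    [K.Normal] [L.Normal] (h1 : FittingHeightLe n (G ⧸ K))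
    (h2 : FittingHeightLe n (G ⧸ L)) : FittingHeightLe n (G ⧸ (K ⊓ L)) := by
  set φ : G →* (G ⧸ K) × (G ⧸ L) :=
    (QuotientGroup.mk' K).prod (QuotientGroup.mk' L) with hφ
  have hker : K ⊓ L = φ.ker := by
    rw [hφ, MonoidHom.ker_prod, QuotientGroup.ker_mk', QuotientGroup.ker_mk']
  have e : (G ⧸ (K ⊓ L)) ≃* (G ⧸ φ.ker) := QuotientGroup.quotientMulEquivOfEq hker
  exact fhle_of_injective n ((QuotientGroup.kerLift φ).comp e.toMonoidHom)
    ((QuotientGroup.kerLift_injective φ).comp e.injective) (fhle_prod n h1 h2)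

lemma fhle_quot_finsetInf {G : Type} [Group G] (n : ℕ) (T : Finset (Subgroup G))
    (hT : ∀ K ∈ T, ∃ hK : K.Normal, (letI := hK; FittingHeightLe n (G ⧸ K))) :
    ∃ h : (T.inf id).Normal, (letI := h; FittingHeightLe n (G ⧸ T.inf id)) := by
  classical
  induction T using Finset.induction_on with
  | empty =>
      have hn : ((∅ : Finset (Subgroup G)).inf id).Normal := by
        rw [Finset.inf_empty]; infer_instance
      refine ⟨hn, ?_⟩
      haveI : Subsingleton (G ⧸ ((∅ : Finset (Subgroup G)).inf id)) :=
        ⟨fun a b => by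
          induction a using QuotientGroup.induction_on
          induction b using QuotientGroup.induction_on
          rw [QuotientGroup.eq]
          simp⟩
      exact fhle_of_subsingleton n
  | @insert a s has ih =>
      obtain ⟨hKa, hfa⟩ := hT a (Finset.mem_insert_self a s)
      obtain ⟨hN, hf⟩ := ih (fun K hKmem => hT K (Finset.mem_insert_of_mem hKmem))
      haveI := hKa; haveI := hN
      have hins : (insert a s).inf id = a ⊓ s.inf id := Finset.inf_insert
      rw [hins]
      exact ⟨inferInstance, fhle_quot_inf n a (s.inf id) hfa hf⟩

theorem statement_0 (G : Type) [Group G] [Finite G] [Nontrivial G]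
    (hsol : IsSolvable G) :
    SG G ≠ ⊥ ∧ SG G ≤ FittingSub G := by
  obtain ⟨m, hm⟩ := (isSolvable_def G).mp hsol
  have hGne : {n | FittingHeightLe n G}.Nonempty := ⟨m, fhle_of_derived m hm⟩
  have hmem : FittingHeightLe (fittingHeight G) G := Nat.sInf_mem hGne
  have hpos : 0 < fittingHeight G := by
    by_contra hc
    push_neg at hc
    have h0 : fittingHeight G = 0 := Nat.le_zero.mp hc
    rw [h0] at hmem
    exact not_subsingleton G hmem
  obtain ⟨N, hN, hnil, hq⟩ : FittingHeightLe (fittingHeight G - 1 + 1) G := by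
    have heq : fittingHeight G - 1 + 1 = fittingHeight G := by omega
    rwa [heq]
  haveI := hN
  have hNlt : fittingHeight (G ⧸ N) < fittingHeight G :=
    lt_of_le_of_lt (Nat.sInf_le hq) (by omega)
  have hNmem : N ∈ {K : Subgroup G | ∃ hK : K.Normal,
      (letI := hK; fittingHeight (G ⧸ K)) < fittingHeight G} := ⟨hN, hNlt⟩
  constructor
  · intro hbot
    haveI : Finite (Subgroup G) :=
      Finite.of_injective (fun K : Subgroup G => (K : Set G)) SetLike.coe_injective
    set S := {K : Subgroup G | ∃ hK : K.Normal,
      (letI := hK; fittingHeight (G ⧸ K)) < fittingHeight G} with hSdef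
    have hSfin : S.Finite := Set.toFinite S
    have key : ∀ K ∈ hSfin.toFinset, ∃ hK : K.Normal,
        (letI := hK; FittingHeightLe (fittingHeight G - 1) (G ⧸ K)) := by
      intro K hKmem
      rw [Set.Finite.mem_toFinset] at hKmem
      obtain ⟨hK, hlt⟩ := hKmem
      refine ⟨hK, ?_⟩
      haveI := hK
      haveI := hsol
      obtain ⟨d, hd⟩ := (isSolvable_def (G ⧸ K)).mp
        (by haveI : Group.IsSolvable G := hsol
            exact Group.isSolvable_of_surjective (QuotientGroup.mk'_surjective K))
      have hne : {k | FittingHeightLe k (G ⧸ K)}.Nonempty := ⟨d, fhle_of_derived d hd⟩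
      have heq : sInf {k | FittingHeightLe k (G ⧸ K)} = fittingHeight (G ⧸ K) := rfl
      exact fhle_of_le (by omega) (Nat.sInf_mem hne)
    obtain ⟨hNormInf, hFinf⟩ :=
      fhle_quot_finsetInf (fittingHeight G - 1) hSfin.toFinset key
    haveI := hNormInf
    have hinf : hSfin.toFinset.inf id = ⊥ := by
      rw [Finset.inf_id_eq_sInf, hSfin.coe_toFinset]
      exact hbot
    have e : G ≃* (G ⧸ hSfin.toFinset.inf id) :=
      (QuotientGroup.quotientBot (G := G)).symm.trans
        (QuotientGroup.quotientMulEquivOfEq hinf.symm)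
    have hG : FittingHeightLe (fittingHeight G - 1) G :=
      fhle_of_injective _ e.toMonoidHom e.injective hFinf
    have hle : fittingHeight G ≤ fittingHeight G - 1 :=
      Nat.sInf_le (show fittingHeight G - 1 ∈ {n | FittingHeightLe n G} from hG)
    omega
  · exact le_trans (sInf_le hNmem)
      (le_iSup_of_le N (le_iSup_of_le hN (le_iSup_of_le hnil le_rfl)))
end

section
/- Let G be a finite solvable group possessing a unique minimal normal subgroup V. Then V acts transitively by conjugation on the set of complements to V in G: for any two subgroups A, B of G with AV = G, A ∩ V = 1, BV = G, B ∩ V = 1, there exists v ∈ V with B^v = A. -/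
open Subgroup MulOpposite
open scoped Pointwise

/-- Centralizer of a normal subgroup is normal. -/
theorem aux_centralizer_normal {G : Type*} [Group G] (H : Subgroup G) (hH : H.Normal) :
    (centralizer (H : Set G)).Normal := by
  constructor
  intro x hx g
  rw [mem_centralizer_iff] at hx ⊢
  intro h hh
  have h1 : g⁻¹ * h * g ∈ H := by simpa using hH.conj_mem h hh g⁻¹
  have h2 := hx _ h1
  calc h * (g * x * g⁻¹) = g * ((g⁻¹ * h * g) * x) * g⁻¹ := by group
    _ = g * (x * (g⁻¹ * h * g)) * g⁻¹ := by rw [h2]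
    _ = g * x * g⁻¹ * h := by group

/-- A minimal normal subgroup of a finite solvable group is abelian of prime exponent. -/
theorem aux_min_structure {G : Type*} [Group G] [Finite G] [Group.IsSolvable G] (V : Subgroup G)
    (hVn : V.Normal) (hV : V ≠ ⊥)
    (hmin : ∀ W : Subgroup G, W.Normal → W ≠ ⊥ → W ≤ V → W = V) :
    (∀ x ∈ V, ∀ y ∈ V, x * y = y * x) ∧ ∃ p : ℕ, p.Prime ∧ ∀ x ∈ V, x ^ p = 1 := by
  haveI := hVn
  have hab : ∀ x ∈ V, ∀ y ∈ V, x * y = y * x := by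
    by_contra hcon
    have hne : ⁅V, V⁆ ≠ ⊥ := by
      intro h
      rw [Subgroup.commutator_eq_bot_iff_le_centralizer] at h
      push_neg at hcon
      obtain ⟨x, hx, y, hy, hxy⟩ := hcon
      exact hxy ((mem_centralizer_iff.mp (h hx)) y hy).symm
    have heq : ⁅V, V⁆ = V := hmin _ (Subgroup.commutator_normal V V) hne
      (Subgroup.commutator_le_left V V)
    have hle : ∀ n, V ≤ derivedSeries G n := by
      intro n
      induction n with
      | zero => exact le_top
      | succ n ih =>
        rw [derivedSeries_succ]
        calc V = ⁅V, V⁆ := heq.symm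
          _ ≤ _ := Subgroup.commutator_mono ih ih
    obtain ⟨n, hn⟩ := (inferInstance : Group.IsSolvable G).solvable
    exact hV (le_bot_iff.mp (hn ▸ hle n))
  refine ⟨hab, ?_⟩
  haveI : Nontrivial V := by
    rw [Subgroup.nontrivial_iff_ne_bot]; exact hV
  have hcard : Nat.card V ≠ 1 := (Subgroup.one_lt_card_iff_ne_bot V |>.mpr hV).ne'
  set p := (Nat.card V).minFac with hp
  have hpp : p.Prime := Nat.minFac_prime hcard
  haveI : Fact p.Prime := ⟨hpp⟩
  obtain ⟨g, hg⟩ := exists_prime_orderOf_dvd_card' (G := V) p (Nat.minFac_dvd _)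
  refine ⟨p, hpp, ?_⟩
  set S : Subgroup G :=
    { carrier := {x | x ∈ V ∧ x ^ p = 1}
      one_mem' := ⟨V.one_mem, one_pow p⟩
      mul_mem' := fun {a b} ha hb => ⟨V.mul_mem ha.1 hb.1, by
        rw [(Commute.mul_pow (by exact hab a ha.1 b hb.1) p), ha.2, hb.2, one_mul]⟩
      inv_mem' := fun {a} ha => ⟨V.inv_mem ha.1, by rw [inv_pow, ha.2, inv_one]⟩ } with hS
  have hSn : S.Normal := by
    constructor
    intro x hx g
    exact ⟨hVn.conj_mem x hx.1 g, by rw [conj_pow, hx.2, mul_one, mul_inv_cancel]⟩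
  have hSne : S ≠ ⊥ := by
    intro h
    have hgS : (g : G) ∈ S := ⟨g.2, by
      have : g ^ p = 1 := by rw [← hg]; exact pow_orderOf_eq_one g
      exact_mod_cast congrArg (Subtype.val) this⟩
    rw [h, Subgroup.mem_bot] at hgS
    have : g = 1 := Subtype.ext hgS
    rw [this, orderOf_one] at hg
    exact hpp.one_lt.ne hg
  have hSV : S = V := hmin S hSn hSne (fun x hx => hx.1)
  intro x hx
  rw [← hSV] at hx
  exact hx.2

/-- Schur-Zassenhaus conjugacy: complements to an abelian normal Hall subgroup are
conjugate by an element of the subgroup. -/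
theorem aux_sz_conj {G : Type*} [Group G] [Finite G] (H : Subgroup G) [H.Normal]
    [IsMulCommutative H] (hco : Nat.Coprime (Nat.card H) H.index)
    (K₁ K₂ : Subgroup G) (h1 : IsComplement' H K₁) (h2 : IsComplement' H K₂) :
    ∃ v ∈ H, K₂.map (MulAut.conj v).toMonoidHom = K₁ := by
  have key : ∀ K : Subgroup G, IsComplement' H K →
      ∃ α : H.QuotientDiff, MulAction.stabilizer G α = K := by
    intro K hK
    have hmem : IsComplement (K : Set G) (H : Set G) := hK.symm
    let T : H.LeftTransversal := ⟨(K : Set G), hmem⟩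
    let α : H.QuotientDiff := Quotient.mk'' T
    refine ⟨α, ?_⟩
    have hle : K ≤ MulAction.stabilizer G α := by
      intro k hk
      rw [MulAction.mem_stabilizer_iff]
      show Quotient.map' (fun β => op k⁻¹ • β) _ (Quotient.mk'' T) = Quotient.mk'' T
      rw [Quotient.map'_mk'']
      congr 1
      refine Subtype.ext ?_
      show op k⁻¹ • (K : Set G) = (K : Set G)
      ext x
      constructor
      · rintro ⟨y, hy, rfl⟩
        exact K.mul_mem hy (K.inv_mem hk)
      · intro hx
        exact ⟨x * k, K.mul_mem hx hk, by simp [smul_eq_mul_unop]⟩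
    have hstab : IsComplement' H (MulAction.stabilizer G α) :=
      isComplement'_stabilizer_of_coprime hco
    have hcard : Nat.card K = Nat.card (MulAction.stabilizer G α) :=
      Nat.eq_of_mul_eq_mul_left Nat.card_pos (hK.card_mul.trans hstab.card_mul.symm)
    exact (Subgroup.eq_of_le_of_card_ge hle hcard.ge).symm
  obtain ⟨α₁, hα₁⟩ := key K₁ h1
  obtain ⟨α₂, hα₂⟩ := key K₂ h2
  obtain ⟨v, hv⟩ := Subgroup.exists_smul_eq hco α₂ α₁
  have hv' : (v : G) • α₂ = α₁ := hv
  refine ⟨(v : G), v.2, ?_⟩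
  rw [← hα₁, ← hv', MulAction.stabilizer_smul_eq_stabilizer_map_conj, hα₂]

theorem statement_4 (G : Type) [Group G] [Finite G] (hsol : IsSolvable G)
    (V : Subgroup G) (hVn : V.Normal) (hV : V ≠ ⊥)
    (hmin : ∀ W : Subgroup G, W.Normal → W ≠ ⊥ → V ≤ W)
    (A B : Subgroup G)
    (hA : A ⊔ V = ⊤) (hA' : A ⊓ V = ⊥)
    (hB : B ⊔ V = ⊤) (hB' : B ⊓ V = ⊥) :
    ∃ v ∈ V, B.map (MulAut.conj v).toMonoidHom = A := by
  classical
  haveI := hVn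
  haveI : Group.IsSolvable G := hsol
  by_cases hVtop : V = ⊤
  · have hA0 : A = ⊥ := by rw [← hA', hVtop, inf_top_eq]
    have hB0 : B = ⊥ := by rw [← hB', hVtop, inf_top_eq]
    exact ⟨1, V.one_mem, by rw [hA0, hB0, Subgroup.map_bot]⟩
  have hmin' : ∀ W : Subgroup G, W.Normal → W ≠ ⊥ → W ≤ V → W = V :=
    fun W h1 h2 h3 => le_antisymm h3 (hmin W h1 h2)
  obtain ⟨hVab, p, hpp, hVp⟩ := aux_min_structure V hVn hV hmin'
  -- product decompositions
  have hprod : ∀ (K : Subgroup G), K ⊔ V = ⊤ → ∀ g : G, ∃ a ∈ K, ∃ v ∈ V, g = a * v := by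
    intro K hK g
    have hg : g ∈ (↑(K ⊔ V) : Set G) := by rw [hK]; trivial
    rw [Subgroup.mul_normal K V] at hg
    obtain ⟨a, ha, v, hv, h⟩ := hg
    exact ⟨a, ha, v, hv, h.symm⟩
  have hprodA := hprod A hA
  -- centralizer of V is V
  have hCV : centralizer (V : Set G) = V := by
    set C := centralizer (V : Set G) with hC
    have hCn : C.Normal := aux_centralizer_normal V hVn
    have hVC : V ≤ C := fun v hv => mem_centralizer_iff.mpr (fun y hy => hVab y hy v hv)
    have hDn : (C ⊓ A).Normal := by
      constructor
      intro x hx g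
      obtain ⟨a, ha, v, hv, rfl⟩ := hprodA g
      have hxv : v * x * v⁻¹ = x := by
        rw [mem_centralizer_iff.mp hx.1 v hv, mul_inv_cancel_right]
      have heq : (a * v) * x * (a * v)⁻¹ = a * (v * x * v⁻¹) * a⁻¹ := by group
      rw [heq, hxv]
      exact ⟨hCn.conj_mem x hx.1 a, A.mul_mem (A.mul_mem ha hx.2) (A.inv_mem ha)⟩
    have hD : C ⊓ A = ⊥ := by
      by_contra h
      have hVA : V ≤ A := (hmin _ hDn h).trans inf_le_right
      have : V ≤ A ⊓ V := le_inf hVA le_rfl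
      rw [hA'] at this
      exact hV (le_bot_iff.mp this)
    refine le_antisymm ?_ hVC
    intro c hc
    obtain ⟨a, ha, v, hv, rfl⟩ := hprodA c
    have haC : a ∈ C := by
      have : a = (a * v) * v⁻¹ := by group
      rw [this]
      exact C.mul_mem hc (C.inv_mem (hVC hv))
    have haD : a ∈ C ⊓ A := ⟨haC, ha⟩
    rw [hD, Subgroup.mem_bot] at haD
    rw [haD, one_mul]
    exact hv
  -- the quotient
  haveI : Nontrivial (G ⧸ V) := by
    obtain ⟨g, hg⟩ : ∃ g, g ∉ V := by
      by_contra h; push_neg at h; exact hVtop ((Subgroup.eq_top_iff' V).mpr h)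
    exact ⟨QuotientGroup.mk' V g, 1, by
      rw [Ne, QuotientGroup.mk'_apply, QuotientGroup.eq_one_iff]; exact hg⟩
  -- minimal normal subgroup of the quotient
  obtain ⟨Nb, hNbS, hNbmin⟩ := (wellFounded_lt (α := Subgroup (G ⧸ V))).has_min
    {W : Subgroup (G ⧸ V) | W.Normal ∧ W ≠ ⊥} ⟨⊤, inferInstance, bot_lt_top.ne'⟩
  obtain ⟨hNbn, hNbne⟩ := hNbS
  have hminb : ∀ W : Subgroup (G ⧸ V), W.Normal → W ≠ ⊥ → W ≤ Nb → W = Nb := by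
    intro W h1 h2 h3
    by_contra h4
    exact hNbmin W ⟨h1, h2⟩ (lt_of_le_of_ne h3 h4)
  obtain ⟨hNab, q, hqq, hNq⟩ := aux_min_structure Nb hNbn hNbne hminb
  -- pull back
  set π := QuotientGroup.mk' V with hπ
  set N := Nb.comap π with hNdef
  have hNn : N.Normal := hNbn.comap π
  haveI := hNn
  have hVN : V ≤ N := by
    intro v hv
    rw [hNdef, Subgroup.mem_comap, hπ, QuotientGroup.mk'_apply]
    have : (v : G ⧸ V) = 1 := (QuotientGroup.eq_one_iff v).mpr hv
    rw [this]; exact Nb.one_mem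
  have hmapN : N.map π = Nb :=
    Subgroup.map_comap_eq_self_of_surjective (QuotientGroup.mk'_surjective V) Nb
  have hNneV : N ≠ V := by
    intro h
    apply hNbne
    rw [← hmapN, h]
    ext x
    simp only [Subgroup.mem_map, Subgroup.mem_bot]
    constructor
    · rintro ⟨v, hv, rfl⟩
      rw [hπ, QuotientGroup.mk'_apply]
      exact (QuotientGroup.eq_one_iff v).mpr hv
    · rintro rfl
      exact ⟨1, V.one_mem, map_one π⟩
  have hnq : ∀ n ∈ N, n ^ q ∈ V := by
    intro n hn
    have h1 : (π n) ^ q = 1 := hNq (π n) (Subgroup.mem_comap.mp hn)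
    rw [← map_pow] at h1
    rw [hπ, QuotientGroup.mk'_apply, QuotientGroup.eq_one_iff] at h1
    exact h1
  -- q ≠ p
  have hqp : q ≠ p := by
    intro hqpeq
    subst hqpeq
    -- N is a q-group
    have hNP : IsPGroup q N := by
      intro x
      refine ⟨2, ?_⟩
      have h1 : (x : G) ^ q ∈ V := hnq _ x.2
      have h2 : ((x : G) ^ q) ^ q = 1 := hVp _ h1
      have h3 : (x : G) ^ q ^ 2 = 1 := by
        rw [pow_two, pow_mul]; exact h2
      exact Subtype.ext (by push_cast; exact h3)
    haveI : Nontrivial N := by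
      rw [Subgroup.nontrivial_iff_ne_bot]
      intro h
      exact hV (le_bot_iff.mp (h ▸ hVN))
    haveI : Fact q.Prime := ⟨hqq⟩
    haveI := hNP.center_nontrivial
    obtain ⟨z, hz1⟩ := exists_ne (1 : center N)
    have hC'n : (centralizer (N : Set G) ⊓ N).Normal := by
      have h1 := aux_centralizer_normal N hNn
      constructor
      intro x hx g
      exact ⟨h1.conj_mem x hx.1 g, hNn.conj_mem x hx.2 g⟩
    have hC'ne : centralizer (N : Set G) ⊓ N ≠ ⊥ := by
      intro h
      have hzmem : ((z : N) : G) ∈ centralizer (N : Set G) ⊓ N := by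
        refine ⟨mem_centralizer_iff.mpr ?_, (z : N).2⟩
        intro y hy
        have hc := (Subgroup.mem_center_iff.mp z.2) ⟨y, hy⟩
        exact congrArg Subtype.val hc
      rw [h, Subgroup.mem_bot] at hzmem
      exact hz1 (Subtype.ext (Subtype.ext hzmem))
    have hVle : V ≤ centralizer (N : Set G) ⊓ N := hmin _ hC'n hC'ne
    have hNleV : N ≤ V := by
      rw [← hCV]
      intro n hn
      rw [mem_centralizer_iff]
      intro v hv
      exact (mem_centralizer_iff.mp (hVle hv).1 n hn).symm
    exact hNneV (le_antisymm hNleV hVN)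
  -- decomposition N = V ⊔ (K ⊓ N)
  have hNdec : ∀ (K : Subgroup G), K ⊔ V = ⊤ → V ⊔ (K ⊓ N) = N := by
    intro K hK
    refine le_antisymm (sup_le hVN inf_le_right) ?_
    intro n hn
    obtain ⟨a, ha, v, hv, rfl⟩ := hprod K hK n
    have haN : a ∈ N := by
      have h1 : a = (a * v) * v⁻¹ := by group
      rw [h1]
      exact N.mul_mem hn (N.inv_mem (hVN hv))
    exact Subgroup.mul_mem _ (Subgroup.mem_sup_right ⟨ha, haN⟩) (Subgroup.mem_sup_left hv)
  -- complements inside N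
  haveI hVNnormal : (V.subgroupOf N).Normal := hVn.subgroupOf N
  have hsubComp : ∀ K : Subgroup G, K ⊔ V = ⊤ → K ⊓ V = ⊥ →
      IsComplement' (V.subgroupOf N) ((K ⊓ N).subgroupOf N) := by
    intro K hK hK'
    apply isComplement'_of_disjoint_and_mul_eq_univ
    · rw [disjoint_iff]
      have h1 : V ⊓ (K ⊓ N) = ⊥ := by
        have h2 : V ⊓ (K ⊓ N) ≤ K ⊓ V := le_inf (inf_le_right.trans inf_le_left) inf_le_left
        rw [hK'] at h2
        exact le_bot_iff.mp h2
      have : (V ⊓ (K ⊓ N)).subgroupOf N = ⊥ := by rw [h1, Subgroup.bot_subgroupOf]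
      rw [← this]
      rfl
    · rw [← Subgroup.normal_mul, ← Subgroup.subgroupOf_sup hVN inf_le_right, hNdec K hK,
        Subgroup.subgroupOf_self, Subgroup.coe_top]
  -- commutativity of V.subgroupOf N
  haveI : IsMulCommutative (V.subgroupOf N) := by
    constructor
    constructor
    intro a b
    have := hVab _ a.2 _ b.2
    exact Subtype.ext (Subtype.ext this)
  -- coprimality
  have hco : Nat.Coprime (Nat.card (V.subgroupOf N)) (V.subgroupOf N).index := by
    have hVpg : IsPGroup p (V.subgroupOf N) := by
      intro x
      exact ⟨1, Subtype.ext (Subtype.ext (by rw [pow_one]; exact hVp _ x.2))⟩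
    have hQq : IsPGroup q (N ⧸ V.subgroupOf N) := by
      intro x
      refine ⟨1, ?_⟩
      obtain ⟨n, rfl⟩ := QuotientGroup.mk_surjective x
      rw [pow_one, ← QuotientGroup.mk_pow, QuotientGroup.eq_one_iff]
      have : ((n ^ q : N) : G) ∈ V := by push_cast; exact hnq _ n.2
      exact this
    haveI : Fact p.Prime := ⟨hpp⟩
    haveI : Fact q.Prime := ⟨hqq⟩
    obtain ⟨a, ha⟩ := IsPGroup.iff_card.mp hVpg
    obtain ⟨b, hb⟩ := IsPGroup.iff_card.mp hQq
    have hidx : (V.subgroupOf N).index = Nat.card (N ⧸ V.subgroupOf N) := rfl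
    rw [ha, hidx, hb]
    exact Nat.Coprime.pow a b ((Nat.coprime_primes hpp hqq).mpr (Ne.symm hqp))
  -- Schur-Zassenhaus conjugacy
  obtain ⟨v, hvmem, hconj⟩ := aux_sz_conj (V.subgroupOf N) hco ((A ⊓ N).subgroupOf N)
    ((B ⊓ N).subgroupOf N) (hsubComp A hA hA') (hsubComp B hB hB')
  set w := (v : G) with hwdef
  have hwV : w ∈ V := hvmem
  have hcomp_eq : N.subtype.comp (MulAut.conj v).toMonoidHom
      = (MulAut.conj w).toMonoidHom.comp N.subtype := by
    ext x; rfl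
  have hconjG : (B ⊓ N).map (MulAut.conj w).toMonoidHom = A ⊓ N := by
    have h1 := congrArg (Subgroup.map N.subtype) hconj
    rw [Subgroup.subgroupOf_map_subtype, Subgroup.map_map, hcomp_eq, ← Subgroup.map_map,
      Subgroup.subgroupOf_map_subtype] at h1
    rw [inf_assoc, inf_idem] at h1
    rwa [inf_assoc, inf_idem] at h1
  -- the conjugated complement
  set B' := B.map (MulAut.conj w).toMonoidHom with hB'def
  have hmapnormal : ∀ (K : Subgroup G), K.Normal → K.map (MulAut.conj w).toMonoidHom = K := by
    intro K hK
    ext x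
    rw [Subgroup.mem_map_equiv, MulAut.conj_symm_apply]
    constructor
    · intro h
      have h1 := hK.conj_mem _ h w
      have h2 : w * (w⁻¹ * x * w) * w⁻¹ = x := by group
      rwa [h2] at h1
    · intro h
      have h1 := hK.conj_mem x h w⁻¹
      rwa [inv_inv] at h1
  have hmapV : V.map (MulAut.conj w).toMonoidHom = V := hmapnormal V hVn
  have hmapN : N.map (MulAut.conj w).toMonoidHom = N := hmapnormal N hNn
  have hinj : Function.Injective (MulAut.conj w).toMonoidHom := (MulAut.conj w).injective
  have hB'sup : B' ⊔ V = ⊤ := by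
    rw [hB'def, ← hmapV, ← Subgroup.map_sup, hB]
    exact Subgroup.map_top_of_surjective _ (MulAut.conj w).surjective
  have hB'inf : B' ⊓ V = ⊥ := by
    rw [hB'def, ← hmapV, ← Subgroup.map_inf _ _ _ hinj, hB', Subgroup.map_bot]
  have hB'N : B' ⊓ N = A ⊓ N := by
    conv_lhs => rw [hB'def, ← hmapN]
    rw [← Subgroup.map_inf _ _ _ hinj, hconjG]
  -- the normalizer argument
  set Q := A ⊓ N with hQdef
  have hQne : Q ≠ ⊥ := by
    intro h
    apply hNneV
    rw [← hNdec A hA, ← hQdef, h, sup_bot_eq]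
  have hnormalizes : ∀ K : Subgroup G, K ≤ normalizer ((K ⊓ N : Subgroup G) : Set G) := by
    intro K k hk
    rw [Subgroup.mem_normalizer_iff]
    intro h
    constructor
    · rintro ⟨h1, h2⟩
      exact ⟨K.mul_mem (K.mul_mem hk h1) (K.inv_mem hk), hNn.conj_mem _ h2 k⟩
    · rintro ⟨h1, h2⟩
      have h3 : k⁻¹ * (k * h * k⁻¹) * k⁻¹⁻¹ = h := by group
      refine ⟨?_, h3 ▸ hNn.conj_mem _ h2 k⁻¹⟩
      have h4 : h = k⁻¹ * (k * h * k⁻¹) * k := by group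
      rw [h4]
      exact K.mul_mem (K.mul_mem (K.inv_mem hk) h1) hk
  set M := normalizer (Q : Set G) with hMdef
  have hAM : A ≤ M := hnormalizes A
  have hB'M : B' ≤ M := by
    have h := hnormalizes B'
    rw [hB'N] at h
    exact h
  have hMsup : M ⊔ V = ⊤ := top_unique (by rw [← hA]; exact sup_le (le_sup_of_le_left hAM) le_sup_right)
  have hVnotleM : ¬ V ≤ M := by
    intro hVM
    have hMtop : M = ⊤ := top_unique (by rw [← hA]; exact sup_le hAM hVM)
    have hQn : Q.Normal := Subgroup.normalizer_eq_top_iff.mp hMtop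
    have hVQ : V ≤ A := (hmin Q hQn hQne).trans inf_le_left
    have : V ≤ A ⊓ V := le_inf hVQ le_rfl
    rw [hA'] at this
    exact hV (le_bot_iff.mp this)
  have hMVn : (M ⊓ V).Normal := by
    constructor
    intro x hx g
    obtain ⟨a, ha, u, hu, rfl⟩ := hprodA g
    have hxu : u * x * u⁻¹ = x := by
      rw [hVab u hu x hx.2, mul_inv_cancel_right]
    have heq : (a * u) * x * (a * u)⁻¹ = a * (u * x * u⁻¹) * a⁻¹ := by group
    rw [heq, hxu]
    have haM : a ∈ M := hAM ha
    exact ⟨M.mul_mem (M.mul_mem haM hx.1) (M.inv_mem haM), hVn.conj_mem x hx.2 a⟩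
  have hMV : M ⊓ V = ⊥ := by
    by_contra h
    exact hVnotleM ((hmin _ hMVn h).trans inf_le_left)
  -- cardinality argument
  have cardc : ∀ K : Subgroup G, K ⊔ V = ⊤ → K ⊓ V = ⊥ →
      Nat.card V * Nat.card K = Nat.card G := by
    intro K h1 h2
    have hc : IsComplement' V K := by
      apply isComplement'_of_disjoint_and_mul_eq_univ
      · rw [disjoint_iff, inf_comm, h2]
      · rw [← Subgroup.normal_mul, sup_comm, h1, Subgroup.coe_top]
    exact hc.card_mul
  have hAcard := cardc A hA hA'
  have hMcard := cardc M hMsup hMV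
  have hB'card := cardc B' hB'sup hB'inf
  have hAM_eq : A = M := Subgroup.eq_of_le_of_card_ge hAM
    (Nat.eq_of_mul_eq_mul_left Nat.card_pos (hMcard.trans hAcard.symm)).le
  have hB'M_eq : B' = M := Subgroup.eq_of_le_of_card_ge hB'M
    (Nat.eq_of_mul_eq_mul_left Nat.card_pos (hMcard.trans hB'card.symm)).le
  exact ⟨w, hwV, hB'M_eq.trans hAM_eq.symm⟩
end

section
/- Let G be a finite solvable group acting transitively on a set Ω of size d > 1, and let a ∈ G act nontrivially on Ω in every primitive quotient action (equivalently: a generates G as a normal subgroup, i.e. G = ⟨a^G⟩ and the action is faithful and transitive with d > 1). Then a fixes at most d/2 points of Ω. -/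
private lemma gen_map {G H : Type*} [Group G] [Group H] (ψ : G →* H)
    (hs : Function.Surjective ψ) (a : G)
    (h : Subgroup.closure {x | IsConj a x} = ⊤) :
    Subgroup.closure {x | IsConj (ψ a) x} = ⊤ := by
  have h1 : Subgroup.map ψ ⊤ = ⊤ := Subgroup.map_top_of_surjective ψ hs
  rw [← h, MonoidHom.map_closure] at h1
  refine top_unique ?_
  rw [← h1]
  refine Subgroup.closure_mono ?_
  rintro _ ⟨x, hx, rfl⟩
  exact ψ.map_isConj hx

private lemma caseTrans {G : Type} [Group G] [Finite G] {Ω : Type} [Finite Ω] [MulAction G Ω]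
    (hfaithful : ∀ g : G, (∀ ω : Ω, g • ω = ω) → g = 1)
    (hd : 1 < Nat.card Ω)
    (a : G) (hgen : Subgroup.closure {x | IsConj a x} = ⊤)
    (N : Subgroup G) (hN : N.Normal)
    (hcomm : ∀ x ∈ N, ∀ y ∈ N, x * y = y * x)
    (hNtrans : ∀ ω₁ ω₂ : Ω, ∃ x ∈ N, x • ω₁ = ω₂) :
    2 * Nat.card {ω : Ω // a • ω = ω} ≤ Nat.card Ω := by
  have hΩnt : Nontrivial Ω := Finite.one_lt_card_iff_nontrivial.1 hd
  obtain ⟨ω₀⟩ : Nonempty Ω := inferInstance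
  -- regularity
  have hreg : ∀ x ∈ N, ∀ ω : Ω, x • ω = ω → x = 1 := by
    intro x hx ω hxω
    apply hfaithful
    intro ω'
    obtain ⟨m, hm, hmω⟩ := hNtrans ω ω'
    calc x • ω' = x • (m • ω) := by rw [hmω]
    _ = (x * m) • ω := (mul_smul _ _ _).symm
    _ = (m * x) • ω := by rw [hcomm x hx m hm]
    _ = m • (x • ω) := mul_smul _ _ _
    _ = ω' := by rw [hxω, hmω]
  -- bijection N ≃ Ω
  have einj : Function.Injective (fun n : ↥N => (n : G) • ω₀) := by
    intro n m h
    have h2 : ((m : G)⁻¹ * n) • ω₀ = ω₀ := by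
      rw [mul_smul]; simp only at h; rw [h, inv_smul_smul]
    have := hreg _ (mul_mem (inv_mem m.2) n.2) ω₀ h2
    ext
    exact (inv_mul_eq_one.1 this).symm ▸ rfl
  have esurj : Function.Surjective (fun n : ↥N => (n : G) • ω₀) := by
    intro ω
    obtain ⟨x, hx, hxω⟩ := hNtrans ω₀ ω
    exact ⟨⟨x, hx⟩, hxω⟩
  let e : ↥N ≃ Ω := Equiv.ofBijective _ ⟨einj, esurj⟩
  -- the homomorphism f
  have fmem : ∀ n : ↥N, (n : G)⁻¹ * (a * n * a⁻¹) ∈ N :=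
    fun n => mul_mem (inv_mem n.2) (hN.conj_mem _ n.2 a)
  let f : ↥N →* ↥N := MonoidHom.mk' (fun n => ⟨(n : G)⁻¹ * (a * n * a⁻¹), fmem n⟩) (by
    intro n m
    apply Subtype.ext
    have hc : ((n : G)⁻¹ * (a * n * a⁻¹)) * (m : G)⁻¹ = (m : G)⁻¹ * ((n : G)⁻¹ * (a * n * a⁻¹)) :=
      hcomm _ (fmem n) _ (inv_mem m.2)
    show ((n * m : ↥N) : G)⁻¹ * (a * (n * m : ↥N) * a⁻¹)
        = ((n : G)⁻¹ * (a * n * a⁻¹)) * ((m : G)⁻¹ * (a * m * a⁻¹))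
    push_cast
    have h2 : ((n:G) * m)⁻¹ * (a * ((n:G) * m) * a⁻¹)
        = (m:G)⁻¹ * ((n:G)⁻¹ * (a * (n:G) * a⁻¹)) * (a * (m:G) * a⁻¹) := by group
    rw [h2, ← hc]
    group)
  have hfcoe : ∀ n : ↥N, (f n : G) = (n : G)⁻¹ * (a * n * a⁻¹) := fun n => rfl
  -- fixed point condition
  have hfix : ∀ n : ↥N, (a • ((n : G) • ω₀) = (n : G) • ω₀) ↔ ((f n : G) • (a • ω₀) = ω₀) := by
    intro n
    have key : (f n : G) • (a • ω₀) = (n : G)⁻¹ • (a • ((n : G) • ω₀)) := by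
      rw [hfcoe, smul_smul, smul_smul, smul_smul]
      congr 1
      group
    rw [key]
    constructor
    · intro h; rw [h, inv_smul_smul]
    · intro h
      have := congrArg (fun z => (n : G) • z) h
      simpa [smul_inv_smul] using this
  -- equiv of fixed sets
  have ecard : Nat.card {ω : Ω // a • ω = ω}
      = Nat.card {n : ↥N // (f n : G) • (a • ω₀) = ω₀} := by
    refine (Nat.card_congr (Equiv.subtypeEquiv e (fun n => ?_))).symm
    exact (hfix n).symm
  by_cases hf : ∀ n : ↥N, f n = 1
  · -- f trivial : a commutes with N
    have hcomm_a : ∀ x ∈ N, a * x = x * a := by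
      intro x hx
      have h1 : (x : G)⁻¹ * (a * x * a⁻¹) = 1 := congrArg Subtype.val (hf ⟨x, hx⟩)
      have h2 : x = a * x * a⁻¹ := inv_mul_eq_one.1 h1
      calc a * x = (a * x * a⁻¹) * a := by group
      _ = x * a := by rw [← h2]
    by_cases haω : a • ω₀ = ω₀
    · exfalso
      have ha1 : a = 1 := by
        apply hfaithful; intro ω
        obtain ⟨x, hx, rfl⟩ := hNtrans ω₀ ω
        calc a • (x • ω₀) = (a * x) • ω₀ := (mul_smul _ _ _).symm
        _ = (x * a) • ω₀ := by rw [hcomm_a x hx]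
        _ = x • (a • ω₀) := mul_smul _ _ _
        _ = x • ω₀ := by rw [haω]
      have hset : {x : G | IsConj a x} = {1} := by
        ext x
        simp only [Set.mem_setOf_eq, Set.mem_singleton_iff, ha1]
        exact isConj_one_right
      rw [hset, Subgroup.closure_singleton_one] at hgen
      obtain ⟨ω₁, ω₂, hww⟩ := hΩnt
      obtain ⟨g, hgN, hgw⟩ := hNtrans ω₁ ω₂
      have hg1 : g ∈ (⊥ : Subgroup G) := hgen ▸ Subgroup.mem_top g
      rw [Subgroup.mem_bot] at hg1
      exact hww (by rw [← hgw, hg1, one_smul])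
    · -- no fixed points
      have hE : IsEmpty {ω : Ω // a • ω = ω} := by
        refine ⟨fun x => ?_⟩
        obtain ⟨ω, hω⟩ := x
        obtain ⟨x, hx, rfl⟩ := hNtrans ω₀ ω
        apply haω
        have h3 : x • (a • ω₀) = x • ω₀ := by
          rw [← mul_smul, ← hcomm_a x hx, mul_smul]; exact hω
        exact smul_left_cancel x h3
      rw [Nat.card_of_isEmpty]
      simp
  · push_neg at hf
    obtain ⟨n₀, hn₀⟩ := hf
    have hker : f.ker ≠ ⊤ := by
      intro h
      exact hn₀ (MonoidHom.mem_ker.1 ((Subgroup.eq_top_iff' _).1 h n₀))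
    have hidx : 2 ≤ f.ker.index := by
      have h0 : f.ker.index ≠ 0 := Subgroup.index_ne_zero_of_finite
      have h1 : f.ker.index ≠ 1 := fun h => hker (Subgroup.index_eq_one.1 h)
      omega
    have hcard : Nat.card f.ker * f.ker.index = Nat.card ↥N := Subgroup.card_mul_index f.ker
    have hb : Nat.card {n : ↥N // (f n : G) • (a • ω₀) = ω₀} ≤ Nat.card f.ker := by
      by_cases hne : Nonempty {n : ↥N // (f n : G) • (a • ω₀) = ω₀}
      · obtain ⟨⟨n₁, hn₁⟩⟩ := hne
        have hmem : ∀ n : ↥N, ((f n : G) • (a • ω₀) = ω₀) → n₁⁻¹ * n ∈ f.ker := by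
          intro n hn
          have hfe : f n = f n₁ := by
            have h2 : ((f n₁ : G)⁻¹ * (f n : G)) • (a • ω₀) = a • ω₀ := by
              conv_lhs => rw [mul_smul, hn, ← hn₁]
              exact inv_smul_smul _ _
            have h3 := hreg _ (mul_mem (inv_mem (f n₁).2) (f n).2) _ h2
            exact (Subtype.ext (inv_mul_eq_one.1 h3)).symm
          rw [MonoidHom.mem_ker, map_mul, map_inv, hfe]
          simp
        refine Nat.card_le_card_of_injective (fun x => ⟨n₁⁻¹ * x.1, hmem x.1 x.2⟩) ?_
        intro x y hxy
        have h4 : n₁⁻¹ * x.1 = n₁⁻¹ * y.1 := congrArg Subtype.val hxy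
        exact Subtype.ext (mul_left_cancel h4)
      · rw [not_nonempty_iff] at hne
        rw [Nat.card_of_isEmpty]
        exact Nat.zero_le _
    have hNcard : Nat.card Ω = Nat.card ↥N := (Nat.card_congr e).symm
    rw [ecard, hNcard, ← hcard]
    calc 2 * Nat.card {n : ↥N // (f n : G) • (a • ω₀) = ω₀}
        ≤ 2 * Nat.card f.ker := by omega
    _ = Nat.card f.ker * 2 := mul_comm _ _
    _ ≤ Nat.card f.ker * f.ker.index := Nat.mul_le_mul_left _ hidx

private lemma card_sigma_const {ι : Type} [Finite ι] (f : ι → Type) [∀ i, Finite (f i)]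
    (b : ℕ) (h : ∀ i, Nat.card (f i) = b) : Nat.card ((i : ι) × f i) = Nat.card ι * b := by
  letI : Fintype ι := Fintype.ofFinite ι
  letI : ∀ i, Fintype (f i) := fun i => Fintype.ofFinite _
  have h2 : ∀ i, Fintype.card (f i) = b := fun i => by rw [← Nat.card_eq_fintype_card, h]
  rw [Nat.card_eq_fintype_card, Fintype.card_sigma, Nat.card_eq_fintype_card]
  simp [h2, Finset.sum_const, Finset.card_univ, Nat.mul_comm]

private lemma caseBlocks {G : Type} [Group G] [Finite G] (hsol : IsSolvable G)
    {Ω : Type} [Finite Ω] [MulAction G Ω]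
    (hfaithful : ∀ g : G, (∀ ω : Ω, g • ω = ω) → g = 1)
    (htrans : ∀ ω₁ ω₂ : Ω, ∃ g : G, g • ω₁ = ω₂)
    (a : G) (hgen : Subgroup.closure {x | IsConj a x} = ⊤)
    (N : Subgroup G) (hN : N.Normal) (hNbot : N ≠ ⊥)
    (ωa ωb : Ω) (hab : ∀ x ∈ N, x • ωa ≠ ωb)
    (n : ℕ) (hΩn : Nat.card Ω ≤ n + 1)
    (IH : ∀ (G' : Type) [Group G'] [Finite G'], IsSolvable G' →
      ∀ (Ω' : Type) [Finite Ω'] [MulAction G' Ω'],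
        (∀ g : G', (∀ ω : Ω', g • ω = ω) → g = 1) →
        (∀ ω₁ ω₂ : Ω', ∃ g : G', g • ω₁ = ω₂) →
        1 < Nat.card Ω' → Nat.card Ω' ≤ n →
        ∀ a' : G', Subgroup.closure {x | IsConj a' x} = ⊤ →
        2 * Nat.card {ω : Ω' // a' • ω = ω} ≤ Nat.card Ω') :
    2 * Nat.card {ω : Ω // a • ω = ω} ≤ Nat.card Ω := by
  let s : Setoid Ω := ⟨fun ω ω' => ∃ x ∈ N, x • ω = ω',
    ⟨fun ω => ⟨1, one_mem N, one_smul G ω⟩,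
     fun {ω ω'} h => by
       obtain ⟨x, hx, rfl⟩ := h
       exact ⟨x⁻¹, inv_mem hx, inv_smul_smul x ω⟩,
     fun {ω ω' ω''} h1 h2 => by
       obtain ⟨x, hx, rfl⟩ := h1
       obtain ⟨y, hy, rfl⟩ := h2
       exact ⟨y * x, mul_mem hy hx, (mul_smul y x ω).symm ▸ rfl⟩⟩⟩
  have hmove : ∀ (g : G) {ω ω' : Ω}, (∃ x ∈ N, x • ω = ω') →
      ∃ x ∈ N, x • (g • ω) = g • ω' := by
    rintro g ω ω' ⟨x, hx, rfl⟩
    exact ⟨g * x * g⁻¹, hN.conj_mem x hx g, by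
      rw [mul_smul, inv_smul_smul, mul_smul]⟩
  letI act : MulAction G (Quotient s) :=
    { smul := fun g => Quotient.map (fun ω => g • ω) (fun ω ω' h => hmove g h)
      one_smul := fun y => Quotient.inductionOn y (fun ω => by
        show Quotient.mk s ((1 : G) • ω) = Quotient.mk s ω
        rw [one_smul])
      mul_smul := fun g h y => Quotient.inductionOn y (fun ω => by
        show Quotient.mk s ((g * h) • ω) = Quotient.mk s (g • (h • ω))
        rw [mul_smul]) }
  have hsq : ∀ (g : G) (ω : Ω), g • (Quotient.mk s ω) = Quotient.mk s (g • ω) :=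
    fun g ω => rfl
  let φ := MulAction.toPermHom G (Quotient s)
  let H := φ.range
  let ψ := φ.rangeRestrict
  have hψs : Function.Surjective ψ := φ.rangeRestrict_surjective
  have hHs : ∀ (g : G) (y : Quotient s), (ψ g) • y = g • y := fun g y => rfl
  have hfaith' : ∀ h : ↥H, (∀ y : Quotient s, h • y = y) → h = 1 := by
    intro h hfix
    apply Subtype.ext
    apply Equiv.ext
    intro y
    exact hfix y
  have htrans' : ∀ y₁ y₂ : Quotient s, ∃ h : ↥H, h • y₁ = y₂ := by
    intro y₁ y₂
    obtain ⟨ω₁, rfl⟩ := Quotient.exists_rep y₁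
    obtain ⟨ω₂, rfl⟩ := Quotient.exists_rep y₂
    obtain ⟨g, hg⟩ := htrans ω₁ ω₂
    exact ⟨ψ g, congrArg (Quotient.mk s) hg⟩
  have hnt' : Nontrivial (Quotient s) := by
    refine ⟨Quotient.mk s ωa, Quotient.mk s ωb, fun h => ?_⟩
    obtain ⟨x, hx, hxe⟩ := Quotient.exact h
    exact hab x hx hxe
  have hd' : 1 < Nat.card (Quotient s) := Finite.one_lt_card_iff_nontrivial.2 hnt'
  have hmoved : ∃ x ∈ N, ∃ ω : Ω, x • ω ≠ ω := by
    by_contra hcon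
    push_neg at hcon
    exact hNbot ((Subgroup.eq_bot_iff_forall N).2 fun x hx =>
      hfaithful x (fun ω => by by_contra hne; exact absurd hne (by simpa using hcon x hx ω)))
  have hfibeq : ∀ ω₁ ω₂ : Ω, Nat.card {ω : Ω // Quotient.mk s ω = Quotient.mk s ω₁}
      = Nat.card {ω : Ω // Quotient.mk s ω = Quotient.mk s ω₂} := by
    intro ω₁ ω₂
    obtain ⟨g, hg⟩ := htrans ω₁ ω₂
    apply Nat.card_congr
    refine ⟨fun x => ⟨g • x.1, ?_⟩, fun y => ⟨g⁻¹ • y.1, ?_⟩,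
      fun x => Subtype.ext (inv_smul_smul g x.1), fun y => Subtype.ext (smul_inv_smul g y.1)⟩
    · rw [← hg, ← hsq, ← hsq, x.2]
    · have h2 : g⁻¹ • ω₂ = ω₁ := by rw [← hg, inv_smul_smul]
      rw [← h2, ← hsq, ← hsq, y.2]
  set b := Nat.card {ω : Ω // Quotient.mk s ω = Quotient.mk s ωa} with hbdef
  have hfib : ∀ y : Quotient s, Nat.card {ω : Ω // Quotient.mk s ω = y} = b := by
    intro y
    obtain ⟨ω₁, rfl⟩ := Quotient.exists_rep y
    exact hfibeq ω₁ ωa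
  have hb2 : 2 ≤ b := by
    obtain ⟨x, hx, ω, hxω⟩ := hmoved
    have h1 : Quotient.mk s (x • ω) = Quotient.mk s ω :=
      Quotient.sound ⟨x⁻¹, inv_mem hx, inv_smul_smul x ω⟩
    have hnt2 : Nontrivial {ω' : Ω // Quotient.mk s ω' = Quotient.mk s ω} :=
      ⟨⟨x • ω, h1⟩, ⟨ω, rfl⟩, fun h => hxω (congrArg Subtype.val h)⟩
    calc 2 ≤ Nat.card {ω' : Ω // Quotient.mk s ω' = Quotient.mk s ω} :=
          Finite.one_lt_card_iff_nontrivial.2 hnt2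
    _ = b := hfibeq ω ωa
  have hcardΩ : Nat.card Ω = Nat.card (Quotient s) * b := by
    rw [← card_sigma_const (fun y : Quotient s => {ω : Ω // Quotient.mk s ω = y}) b hfib]
    exact (Nat.card_congr (Equiv.sigmaFiberEquiv (Quotient.mk s))).symm
  have hQpos : 0 < Nat.card (Quotient s) := Nat.card_pos
  have hQn : Nat.card (Quotient s) ≤ n := by
    have h3 := hΩn
    rw [hcardΩ] at h3
    have h2 : Nat.card (Quotient s) * 2 ≤ Nat.card (Quotient s) * b :=
      Nat.mul_le_mul_left _ hb2
    omega
  have hsolv' : IsSolvable ↥H := by haveI : Group.IsSolvable G := hsol; exact solvable_of_surjective hψs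
  have IHres := IH ↥H hsolv' (Quotient s) hfaith' htrans' hd' hQn (ψ a)
    (gen_map ψ hψs a hgen)
  have hfixmap : ∀ ω : Ω, a • ω = ω → (ψ a) • (Quotient.mk s ω) = Quotient.mk s ω := by
    intro ω hω
    rw [hHs, hsq, hω]
  have hinj : Nat.card {ω : Ω // a • ω = ω}
      ≤ Nat.card ((y : {y : Quotient s // (ψ a) • y = y}) ×
        {ω : Ω // Quotient.mk s ω = y.1}) := by
    refine Nat.card_le_card_of_injective
      (fun x => ⟨⟨Quotient.mk s x.1, hfixmap x.1 x.2⟩, ⟨x.1, rfl⟩⟩) ?_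
    intro x y hxy
    exact Subtype.ext (congrArg (fun z : ((y : {y : Quotient s // (ψ a) • y = y}) ×
      {ω : Ω // Quotient.mk s ω = y.1}) => z.2.1) hxy)
  have hsig : Nat.card ((y : {y : Quotient s // (ψ a) • y = y}) ×
      {ω : Ω // Quotient.mk s ω = y.1})
      = Nat.card {y : Quotient s // (ψ a) • y = y} * b :=
    card_sigma_const _ b (fun y => hfib y.1)
  rw [hsig] at hinj
  calc 2 * Nat.card {ω : Ω // a • ω = ω}
      ≤ 2 * (Nat.card {y : Quotient s // (ψ a) • y = y} * b) := by omega
  _ = (2 * Nat.card {y : Quotient s // (ψ a) • y = y}) * b := by ring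
  _ ≤ Nat.card (Quotient s) * b := Nat.mul_le_mul_right _ IHres
  _ = Nat.card Ω := hcardΩ.symm

private lemma aux : ∀ (n : ℕ) (G : Type) [Group G] [Finite G], IsSolvable G →
    ∀ (Ω : Type) [Finite Ω] [MulAction G Ω],
      (∀ g : G, (∀ ω : Ω, g • ω = ω) → g = 1) →
      (∀ ω₁ ω₂ : Ω, ∃ g : G, g • ω₁ = ω₂) →
      1 < Nat.card Ω → Nat.card Ω ≤ n →
      ∀ a : G, Subgroup.closure {x | IsConj a x} = ⊤ →
      2 * Nat.card {ω : Ω // a • ω = ω} ≤ Nat.card Ω := by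
  intro n
  induction n with
  | zero =>
    intro G _ _ _ Ω _ _ _ _ hd hn a _
    omega
  | succ n IHn =>
    intro G _ _ hsol Ω _ _ hfaithful htrans hd hn a hgen
    -- G is nontrivial
    have hΩnt : Nontrivial Ω := Finite.one_lt_card_iff_nontrivial.1 hd
    obtain ⟨ω₁, ω₂, hww⟩ := hΩnt
    obtain ⟨g₀, hg₀⟩ := htrans ω₁ ω₂
    have hGnt : Nontrivial G := ⟨g₀, 1, fun h => hww (by rw [← hg₀, h, one_smul])⟩
    -- the last nontrivial derived subgroup
    obtain ⟨k, hk⟩ := hsol.solvable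
    have hS : {i : ℕ | derivedSeries G i = ⊥}.Nonempty := ⟨k, hk⟩
    have hm : derivedSeries G (sInf {i : ℕ | derivedSeries G i = ⊥}) = ⊥ := Nat.sInf_mem hS
    have hm0 : sInf {i : ℕ | derivedSeries G i = ⊥} ≠ 0 := by
      intro h
      rw [h] at hm
      obtain ⟨x, y, hxy⟩ := hGnt
      apply hxy
      have hx : x ∈ (⊥ : Subgroup G) := hm ▸ Subgroup.mem_top x
      have hy : y ∈ (⊥ : Subgroup G) := hm ▸ Subgroup.mem_top y
      rw [Subgroup.mem_bot] at hx hy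
      rw [hx, hy]
    obtain ⟨m, hmm⟩ : ∃ m, sInf {i : ℕ | derivedSeries G i = ⊥} = m + 1 :=
      ⟨(sInf {i : ℕ | derivedSeries G i = ⊥}) - 1, by omega⟩
    set N : Subgroup G := derivedSeries G m with hNdef
    have hNnormal : N.Normal := derivedSeries_normal G m
    have hNbot : N ≠ ⊥ := by
      intro h
      have h2 : m ∈ {i : ℕ | derivedSeries G i = ⊥} := h
      have := Nat.sInf_le h2
      omega
    have hcomm : ∀ x ∈ N, ∀ y ∈ N, x * y = y * x := by
      intro x hx y hy
      have h1 : derivedSeries G (m + 1) = ⊥ := by rw [← hmm]; exact hm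
      rw [derivedSeries_succ] at h1
      have h2 : ⁅N, N⁆ ≤ ⊥ := le_of_eq h1
      have h3 := Subgroup.commutator_le.1 h2 x hx y hy
      rw [Subgroup.mem_bot] at h3
      exact (commutatorElement_eq_one_iff_commute.1 h3)
    by_cases hNt : ∀ ωx ωy : Ω, ∃ x ∈ N, x • ωx = ωy
    · exact caseTrans hfaithful hd a hgen N hNnormal hcomm hNt
    · push_neg at hNt
      obtain ⟨ωa, ωb, hab⟩ := hNt
      exact caseBlocks hsol hfaithful htrans a hgen N hNnormal hNbot ωa ωb hab n hn IHn

theorem statement_6 (G : Type) [Group G] [Finite G] (hsol : IsSolvable G)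
    (Ω : Type) [Finite Ω] [MulAction G Ω]
    (hfaithful : ∀ g : G, (∀ ω : Ω, g • ω = ω) → g = 1)
    (htrans : ∀ ω₁ ω₂ : Ω, ∃ g : G, g • ω₁ = ω₂)
    (hd : 1 < Nat.card Ω)
    (a : G) (hgen : Subgroup.closure {x | IsConj a x} = ⊤) :
    2 * Nat.card {ω : Ω // a • ω = ω} ≤ Nat.card Ω :=
  aux (Nat.card Ω) G hsol Ω hfaithful htrans hd le_rfl a hgen
end

section
/- Let G be a finite group and x ∈ G an element of order 2 such that ⟨x, x^g⟩ is a 2-group for every g ∈ G. Then the normal closure ⟨x^G⟩ is nilpotent (in fact x lies in O_2(G)). -/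
open Subgroup

namespace BSaux

variable {G : Type*} [Group G]

theorem conj_mem_closure {X : Set G} {g : G} (hg : ∀ x ∈ X, g * x * g⁻¹ ∈ X)
    {h : G} (hh : h ∈ closure X) : g * h * g⁻¹ ∈ closure X := by
  induction hh using closure_induction with
  | mem x hx => exact subset_closure (hg x hx)
  | one => simpa using one_mem _
  | mul x y hx hy px py =>
      have e : g * (x * y) * g⁻¹ = (g * x * g⁻¹) * (g * y * g⁻¹) := by group
      rw [e]; exact mul_mem px py
  | inv x hx px =>
      have e : g * x⁻¹ * g⁻¹ = (g * x * g⁻¹)⁻¹ := by group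
      rw [e]; exact inv_mem px

theorem mem_normalizer_closure {X : Set G} {g : G} (h1 : ∀ x ∈ X, g * x * g⁻¹ ∈ X)
    (h2 : ∀ x ∈ X, g⁻¹ * x * g ∈ X) : g ∈ normalizer (closure X : Set G) := by
  rw [mem_normalizer_iff]
  intro h
  constructor
  · exact fun hh => conj_mem_closure h1 hh
  · intro hh
    have h2' : ∀ x ∈ X, g⁻¹ * x * g⁻¹⁻¹ ∈ X := by simpa using h2
    have := conj_mem_closure h2' hh
    have e : g⁻¹ * (g * h * g⁻¹) * g⁻¹⁻¹ = h := by group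
    rwa [e] at this

theorem card_eq_ncard (H : Subgroup G) : Nat.card H = (H : Set G).ncard := by
  rw [← Nat.card_coe_set_eq]; rfl

theorem card_le_card_of_le [Finite G] {H K : Subgroup G} (h : H ≤ K) :
    Nat.card H ≤ Nat.card K := by
  rw [card_eq_ncard, card_eq_ncard]
  exact Set.ncard_le_ncard h (Set.toFinite _)

theorem card_lt_card_of_lt [Finite G] {H K : Subgroup G} (h : H < K) :
    Nat.card H < Nat.card K := by
  rw [card_eq_ncard, card_eq_ncard]
  exact Set.ncard_lt_ncard (SetLike.coe_ssubset_coe.mpr h) (Set.toFinite _)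


theorem card_lt_of_ne_top [Finite G] {H : Subgroup G} (h : H ≠ ⊤) :
    Nat.card H < Nat.card G := by
  have := card_lt_card_of_lt (lt_top_iff_ne_top.mpr h)
  rwa [Subgroup.card_top] at this

theorem eq_of_le_of_card_le [Finite G] {H K : Subgroup G} (hle : H ≤ K)
    (hc : Nat.card K ≤ Nat.card H) : H = K := by
  refine SetLike.coe_injective (Set.eq_of_subset_of_ncard_le hle ?_ (Set.toFinite _))
  rwa [← card_eq_ncard, ← card_eq_ncard]

theorem map_closure_subtype (K : Subgroup G) (S : Set G) (hS : S ⊆ (K : Set G)) :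
    (closure (K.subtype ⁻¹' S)).map K.subtype = closure S := by
  rw [MonoidHom.map_closure]
  congr 1
  rw [Set.image_preimage_eq_inter_range]
  have : Set.range K.subtype = (K : Set G) := by
    ext y; simp [Subgroup.coe_subtype, Subtype.range_coe]
  rw [this]
  exact Set.inter_eq_left.mpr hS

theorem isPGroup_of_map {K : Subgroup G} (H : Subgroup K)
    (h : IsPGroup 2 (H.map K.subtype)) : IsPGroup 2 H := by
  have := h.comap_of_injective K.subtype K.subtype_injective
  rwa [comap_map_eq_self_of_injective K.subtype_injective] at this

theorem normalizer_lift {K R : Subgroup G} (hRK : R ≤ K) {d : K}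
    (hd : d ∈ normalizer ((R.subgroupOf K) : Set K)) : (d : G) ∈ normalizer (R : Set G) := by
  rw [mem_normalizer_iff] at hd ⊢
  intro h
  constructor
  · intro hh
    have hhK : h ∈ K := hRK hh
    have := (hd ⟨h, hhK⟩).mp (by simpa [mem_subgroupOf] using hh)
    simpa [mem_subgroupOf] using this
  · intro hh
    have hK : (d : G) * h * (d : G)⁻¹ ∈ K := hRK hh
    have hhK : h ∈ K := by
      have h2 : (d : G)⁻¹ * ((d : G) * h * (d : G)⁻¹) * (d : G) ∈ K :=
        mul_mem (mul_mem (inv_mem d.2) hK) d.2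
      have e : (d : G)⁻¹ * ((d : G) * h * (d : G)⁻¹) * (d : G) = h := by group
      rwa [e] at h2
    have := (hd ⟨h, hhK⟩).mpr (by simpa [mem_subgroupOf] using hh)
    simpa [mem_subgroupOf] using this


theorem map_subtype_top (K : Subgroup G) : (⊤ : Subgroup K).map K.subtype = K := by
  rw [← MonoidHom.range_eq_map, range_subtype]

universe u

/-- Key p-group lemma: if `X` is a conjugation-invariant generating set of the finite
2-group `Q` and `R = ⟨X ∩ R⟩` is a proper subgroup, then some element of `X` outside `R`
normalizes `R`. -/
theorem lemP : ∀ (n : ℕ) (Q : Type u) [Group Q] [Finite Q], Nat.card Q ≤ n →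
    IsPGroup 2 Q → ∀ (X : Set Q), (∀ (g : Q), ∀ x ∈ X, g * x * g⁻¹ ∈ X) →
    closure X = ⊤ → ∀ R : Subgroup Q, closure (X ∩ R) = R → R ≠ ⊤ →
    ∃ d, d ∈ X ∧ d ∉ R ∧ d ∈ normalizer (R : Set Q) := by
  intro n
  induction n with
  | zero =>
      intro Q _ _ hc
      have := Nat.card_pos (α := Q)
      omega
  | succ n IH =>
      intro Q _ _ hcard hQ X hX hXgen R hR hRtop
      haveI : Fact (Nat.Prime 2) := ⟨Nat.prime_two⟩
      haveI : Finite (Subgroup Q) := Finite.of_injective _ SetLike.coe_injective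
      obtain ⟨U, hU, hUmax⟩ := Set.Finite.exists_maximalFor
        (fun (U : Subgroup Q) => Nat.card U)
        {U : Subgroup Q | R ≤ U ∧ U ≠ ⊤} (Set.toFinite _) ⟨R, le_refl R, hRtop⟩
      obtain ⟨hRU, hUtop⟩ := hU
      have hUnormal : U.Normal := by
        rw [← normalizer_eq_top_iff]
        by_contra hne
        haveI := hQ.isNilpotent
        have hlt : U < normalizer (U : Set Q) :=
          normalizerCondition_of_isNilpotent U (lt_top_iff_ne_top.mpr hUtop)
        have hcardlt : Nat.card U < Nat.card (normalizer (U : Set Q)) := card_lt_card_of_lt hlt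
        have heq := hUmax (j := normalizer (U : Set Q)) ⟨hRU.trans hlt.le, hne⟩ hcardlt.le
        simp only at heq
        omega
      have hexd : ∃ d ∈ X, d ∉ U := by
        by_contra hcon
        push_neg at hcon
        have : closure X ≤ U := (closure_le _).mpr (fun x hx => hcon x hx)
        rw [hXgen] at this
        exact hUtop (top_le_iff.mp this)
      by_cases hcase : closure (X ∩ U) = R
      · obtain ⟨d, hdX, hdU⟩ := hexd
        refine ⟨d, hdX, fun hdR => hdU (hRU hdR), ?_⟩
        rw [← hcase]
        refine mem_normalizer_closure ?_ ?_
        · rintro x ⟨hx1, hx2⟩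
          exact ⟨hX d x hx1, hUnormal.conj_mem x hx2 d⟩
        · rintro x ⟨hx1, hx2⟩
          refine ⟨by simpa using hX d⁻¹ x hx1, by simpa using hUnormal.conj_mem x hx2 d⁻¹⟩
      · set Q' : Subgroup Q := closure (X ∩ U) with hQ'def
        have hQ'U : Q' ≤ U := (closure_le _).mpr (fun x hx => hx.2)
        have hRQ' : R ≤ Q' := by
          conv_lhs => rw [← hR]
          exact closure_mono (fun x hx => ⟨hx.1, hRU hx.2⟩)
        have hXUQ' : X ∩ (U : Set Q) ⊆ (Q' : Set Q) := fun x hx => subset_closure hx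
        have hcardQ' : Nat.card Q' < Nat.card Q := by
          have h1 : Nat.card Q' ≤ Nat.card U := card_le_card_of_le hQ'U
          have h2 : Nat.card U < Nat.card Q := card_lt_of_ne_top hUtop
          omega
        -- set up the recursive call inside Q'
        set X' : Set Q' := Q'.subtype ⁻¹' X with hX'def
        have hX'inv : ∀ (g : Q'), ∀ x ∈ X', g * x * g⁻¹ ∈ X' := by
          intro g x hx
          exact hX (g : Q) (x : Q) hx
        have himg : X' = Q'.subtype ⁻¹' (X ∩ (Q' : Set Q)) := by
          ext z
          simp [hX'def, Subgroup.coe_subtype, z.2]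
        have hXQ' : closure (X ∩ (Q' : Set Q)) = Q' := by
          refine le_antisymm ((closure_le _).mpr (fun x hx => hx.2)) ?_
          conv_lhs => rw [hQ'def]
          exact closure_mono (fun x hx => ⟨hx.1, hXUQ' hx⟩)
        have hX'gen : closure X' = ⊤ := by
          apply map_injective Q'.subtype_injective
          rw [himg, map_closure_subtype _ _ Set.inter_subset_right, hXQ', map_subtype_top]
        set R' : Subgroup Q' := R.subgroupOf Q' with hR'def
        have hmapR' : R'.map Q'.subtype = R := by
          rw [hR'def, subgroupOf_map_subtype, inf_of_le_left hRQ']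
        have hR' : closure (X' ∩ (R' : Set Q')) = R' := by
          apply map_injective Q'.subtype_injective
          have himg2 : X' ∩ (R' : Set Q') = Q'.subtype ⁻¹' (X ∩ (R : Set Q)) := by
            ext z
            simp [hX'def, hR'def, Subgroup.coe_subtype, mem_subgroupOf]
          rw [himg2, map_closure_subtype _ _ (fun x hx => hRQ' hx.2), hR, hmapR']
        have hR'top : R' ≠ ⊤ := by
          intro hcon
          apply hcase
          rw [← map_subtype_top Q', ← hcon, hmapR']
        obtain ⟨d', hd'X, hd'R, hd'N⟩ := IH Q' (by omega) (hQ.to_subgroup Q') X' hX'inv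
          hX'gen R' hR' hR'top
        refine ⟨(d' : Q), hd'X, ?_, normalizer_lift hRQ' hd'N⟩
        intro hcon
        exact hd'R (mem_subgroupOf.mpr hcon)


/-- Main lemma (Baer-Suzuki for involutions, set version): if `D` is a conjugation-invariant
set of involutions in the finite group `G` such that any two elements of `D` generate a
2-group, then `⟨D⟩` is a 2-group. -/
theorem main : ∀ (n : ℕ) (G : Type u) [Group G] [Finite G], Nat.card G ≤ n →
    ∀ (D : Set G), (∀ (g : G), ∀ d ∈ D, g * d * g⁻¹ ∈ D) →
    (∀ d ∈ D, orderOf d = 2) →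
    (∀ a ∈ D, ∀ b ∈ D, IsPGroup 2 (closure {a, b})) →
    IsPGroup 2 (closure D) := by
  intro n
  induction n with
  | zero =>
      intro G _ _ hc
      have := Nat.card_pos (α := G)
      omega
  | succ n IH =>
      intro G _ _ hcard D hinv hord hpair
      haveI : Fact (Nat.Prime 2) := ⟨Nat.prime_two⟩
      by_cases hD0 : D = ∅
      · rw [hD0, Subgroup.closure_empty]
        exact IsPGroup.of_bot
      by_cases hgen : closure D = ⊤
      case neg =>
        -- restrict to the proper subgroup `H = ⟨D⟩`
        set H : Subgroup G := closure D with hHdef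
        have hDH : D ⊆ (H : Set G) := subset_closure
        set D' : Set H := H.subtype ⁻¹' D with hD'def
        have hres : IsPGroup 2 (closure D') := by
          refine IH H (by have := card_lt_of_ne_top hgen; omega) D' ?_ ?_ ?_
          · intro g d hd
            exact hinv (g : G) (d : G) hd
          · intro d hd
            have h1 : orderOf (H.subtype d) = orderOf d :=
              orderOf_injective H.subtype H.subtype_injective d
            rw [← h1]
            exact hord (H.subtype d) hd
          · intro a ha b hb
            apply isPGroup_of_map
            have hmp : (closure {a, b}).map H.subtype = closure {(a : G), (b : G)} := by
              rw [MonoidHom.map_closure, Set.image_pair]; rfl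
            rw [hmp]
            exact hpair (a : G) ha (b : G) hb
        have hmap : (closure D').map H.subtype = closure D := map_closure_subtype H D hDH
        have hfin : IsPGroup 2 ((Subgroup.closure D').map H.subtype) := hres.map H.subtype
        rw [hmap] at hfin
        exact hfin
      case pos =>
      by_cases hnorm : ∃ R : Subgroup G, R.Normal ∧ R ≠ ⊥ ∧ IsPGroup 2 R
      · -- quotient by a nontrivial normal 2-subgroup
        obtain ⟨R, hRnormal, hRbot, hRp⟩ := hnorm
        haveI := hRnormal
        set π := QuotientGroup.mk' R with hπdef
        have hπs : Function.Surjective π := QuotientGroup.mk'_surjective R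
        have hcards : Nat.card G = Nat.card (G ⧸ R) * Nat.card R :=
          Subgroup.card_eq_card_quotient_mul_card_subgroup R
        have h2R : 2 ≤ Nat.card R := by
          have := (Subgroup.one_lt_card_iff_ne_bot (H := R)).mpr hRbot
          omega
        have hQpos : 0 < Nat.card (G ⧸ R) := Nat.card_pos
        have hcardQ : Nat.card (G ⧸ R) ≤ n := by
          have hlt : Nat.card (G ⧸ R) < Nat.card G := by
            calc Nat.card (G ⧸ R) < Nat.card (G ⧸ R) * 2 := by omega
            _ ≤ Nat.card (G ⧸ R) * Nat.card R := Nat.mul_le_mul_left _ h2R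
            _ = Nat.card G := hcards.symm
          omega
        set Dq : Set (G ⧸ R) := (π '' D) \ {1} with hDqdef
        have hq : IsPGroup 2 (closure Dq) := by
          refine IH (G ⧸ R) hcardQ Dq ?_ ?_ ?_
          · rintro g d ⟨⟨a, haD, rfl⟩, hne⟩
            obtain ⟨gg, rfl⟩ := hπs g
            refine ⟨⟨gg * a * gg⁻¹, hinv gg a haD, by simp⟩, ?_⟩
            simp only [Set.mem_singleton_iff] at hne ⊢
            intro hc
            apply hne
            have e1 : (π gg)⁻¹ * (π gg * π a * (π gg)⁻¹) * (π gg) = π a := by group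
            rw [← e1, hc]
            group
          · rintro d ⟨⟨a, haD, rfl⟩, hne⟩
            refine orderOf_eq_prime ?_ (by simpa using hne)
            rw [← map_pow]
            have ha2 : a ^ 2 = 1 := by
              have := pow_orderOf_eq_one a
              rwa [hord a haD] at this
            rw [ha2, map_one]
          · rintro a ⟨⟨a0, ha0, rfl⟩, -⟩ b ⟨⟨b0, hb0, rfl⟩, -⟩
            have := (hpair a0 ha0 b0 hb0).map π
            rwa [MonoidHom.map_closure, Set.image_pair] at this
        have hclπD : closure (π '' D) = ⊤ := by
          rw [← MonoidHom.map_closure, hgen]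
          exact Subgroup.map_top_of_surjective π hπs
        have hDqtop : closure Dq = ⊤ := by
          refine le_antisymm le_top ?_
          rw [← hclπD]
          refine (closure_le _).mpr ?_
          intro y hy
          by_cases hy1 : y = 1
          · rw [hy1]; exact one_mem _
          · exact subset_closure ⟨hy, hy1⟩
        rw [hDqtop] at hq
        have hquot : IsPGroup 2 (G ⧸ R) := hq.of_equiv Subgroup.topEquiv
        obtain ⟨k, hk⟩ := IsPGroup.iff_card.mp hquot
        obtain ⟨l, hl⟩ := IsPGroup.iff_card.mp hRp
        have hGcard : Nat.card G = 2 ^ (k + l) := by rw [hcards, hk, hl, pow_add]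
        exact (IsPGroup.of_card hGcard).to_subgroup _
      · -- the heart of the argument
        exfalso
        obtain ⟨d₀, hd₀⟩ : D.Nonempty := Set.nonempty_iff_ne_empty.mpr hD0
        have hne1 : ∀ d ∈ D, d ≠ 1 := by
          intro d hd h1
          have := hord d hd
          rw [h1, orderOf_one] at this
          omega
        haveI : Nontrivial G := ⟨⟨d₀, 1, hne1 d₀ hd₀⟩⟩
        have hG2 : ¬ IsPGroup 2 G := by
          intro hG
          refine hnorm ⟨⊤, inferInstance, ?_, hG.to_subgroup ⊤⟩
          intro hc
          exact hne1 d₀ hd₀ (Subgroup.mem_bot.mp (hc ▸ Subgroup.mem_top d₀))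
        haveI : Finite (Subgroup G) := Finite.of_injective _ SetLike.coe_injective
        haveI : Finite (Sylow 2 G) :=
          Finite.of_injective (fun T : Sylow 2 G => (T : Subgroup G)) (fun T T' h => Sylow.ext h)
        set W : Sylow 2 G → Subgroup G := fun T => closure (D ∩ ((T : Subgroup G) : Set G)) with hWdef
        have f_inter : ∀ (g : G) (T : Sylow 2 G),
            D ∩ (((g • T : Sylow 2 G) : Subgroup G) : Set G)
              = (fun x => g * x * g⁻¹) '' (D ∩ ((T : Subgroup G) : Set G)) := by
          intro g T
          ext y
          constructor
          · rintro ⟨hyD, hyT⟩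
            rw [SetLike.mem_coe, Sylow.coe_subgroup_smul,
              Subgroup.mem_smul_pointwise_iff_exists] at hyT
            obtain ⟨z, hz, hzy⟩ := hyT
            have hyz : y = g * z * g⁻¹ := by rw [← hzy]; rfl
            subst hyz
            refine ⟨z, ⟨?_, hz⟩, rfl⟩
            have hh := hinv g⁻¹ (g * z * g⁻¹) hyD
            have e : g⁻¹ * (g * z * g⁻¹) * g⁻¹⁻¹ = z := by group
            rwa [e] at hh
          · rintro ⟨z, ⟨hzD, hzT⟩, rfl⟩
            refine ⟨hinv g z hzD, ?_⟩
            rw [SetLike.mem_coe, Sylow.coe_subgroup_smul,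
              Subgroup.mem_smul_pointwise_iff_exists]
            exact ⟨z, hzT, rfl⟩
        have hWconj : ∀ (g : G) (T : Sylow 2 G),
            W (g • T) = (W T).map (MulAut.conj g).toMonoidHom := by
          intro g T
          show Subgroup.closure _ = (Subgroup.closure _).map _
          rw [f_inter g T, MonoidHom.map_closure]
          congr 1
        have hDT_ncard : ∀ T T' : Sylow 2 G,
            (D ∩ ((T : Subgroup G) : Set G)).ncard = (D ∩ ((T' : Subgroup G) : Set G)).ncard := by
          intro T T'
          obtain ⟨g, rfl⟩ := MulAction.exists_smul_eq G T T'
          rw [f_inter g T]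
          refine (Set.ncard_image_of_injective _ ?_).symm
          intro a b hab
          simpa using mul_left_cancel (mul_right_cancel (hab : g * a * g⁻¹ = g * b * g⁻¹))
        have hWle : ∀ T : Sylow 2 G, W T ≤ (T : Subgroup G) :=
          fun T => (closure_le _).mpr Set.inter_subset_right
        have hWp : ∀ T : Sylow 2 G, IsPGroup 2 (W T) := fun T => T.isPGroup'.to_le (hWle T)
        have hDinW : ∀ T : Sylow 2 G, D ∩ ((T : Subgroup G) : Set G) ⊆ ((W T) : Set G) :=
          fun T => subset_closure
        have hDT_ne : ∀ T : Sylow 2 G, (D ∩ ((T : Subgroup G) : Set G)).Nonempty := by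
          have h0 : ∃ T₀ : Sylow 2 G, d₀ ∈ (T₀ : Subgroup G) := by
            have hp : IsPGroup 2 (closure {d₀, d₀} : Subgroup G) := hpair d₀ hd₀ d₀ hd₀
            rw [Set.pair_eq_singleton] at hp
            obtain ⟨T₀, hT₀⟩ := hp.exists_le_sylow
            exact ⟨T₀, hT₀ (subset_closure rfl)⟩
          obtain ⟨T₀, hT₀⟩ := h0
          intro T
          obtain ⟨g, rfl⟩ := MulAction.exists_smul_eq G T₀ T
          rw [f_inter g T₀]
          exact ⟨g * d₀ * g⁻¹, ⟨d₀, ⟨hd₀, hT₀⟩, rfl⟩⟩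
        have hWbot : ∀ T : Sylow 2 G, W T ≠ ⊥ := by
          intro T hc
          obtain ⟨d, hd⟩ := hDT_ne T
          have hdW : d ∈ W T := hDinW T hd
          rw [hc, Subgroup.mem_bot] at hdW
          exact hne1 d hd.1 hdW
        have hWtop' : ∀ T : Sylow 2 G, W T ≠ ⊤ := by
          intro T hc
          apply hG2
          have hh := hWp T
          rw [hc] at hh
          exact hh.of_equiv Subgroup.topEquiv
        have hWnorm : ∀ T : Sylow 2 G, normalizer (W T : Set G) ≠ ⊤ := by
          intro T hc
          exact hnorm ⟨W T, normalizer_eq_top_iff.mp hc, hWbot T, hWp T⟩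
        have hTleN : ∀ T : Sylow 2 G, (T : Subgroup G) ≤ normalizer (W T : Set G) := by
          intro T t ht
          refine mem_normalizer_closure ?_ ?_
          · rintro x ⟨hx1, hx2⟩
            exact ⟨hinv t x hx1, mul_mem (mul_mem ht hx2) (inv_mem ht)⟩
          · rintro x ⟨hx1, hx2⟩
            exact ⟨by simpa using hinv t⁻¹ x hx1, mul_mem (mul_mem (inv_mem ht) hx2) ht⟩
        have hproper2 : ∀ K : Subgroup G, K ≠ ⊤ →
            IsPGroup 2 (closure (D ∩ (K : Set G))) := by
          intro K hK
          set E : Set K := K.subtype ⁻¹' D with hEdef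
          have hres : IsPGroup 2 (closure E) := by
            refine IH K (by have := card_lt_of_ne_top hK; omega) E ?_ ?_ ?_
            · intro g d hd
              exact hinv (g : G) (d : G) hd
            · intro d hd
              have h1 : orderOf (K.subtype d) = orderOf d :=
                orderOf_injective K.subtype K.subtype_injective d
              rw [← h1]
              exact hord (K.subtype d) hd
            · intro a ha b hb
              apply isPGroup_of_map
              have hmp : (closure {a, b}).map K.subtype = closure {(a : G), (b : G)} := by
                rw [MonoidHom.map_closure, Set.image_pair]; rfl
              rw [hmp]
              exact hpair (a : G) ha (b : G) hb
          have heq : (closure E).map K.subtype = closure (D ∩ (K : Set G)) := by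
            have hE2 : E = K.subtype ⁻¹' (D ∩ (K : Set G)) := by
              ext z
              simp [hEdef, Subgroup.coe_subtype, z.2]
            rw [hE2, map_closure_subtype K _ Set.inter_subset_right]
          rw [← heq]
          exact hres.map _
        have h_mem_syl : ∀ (T : Sylow 2 G), ∀ y ∈ D, y ∈ normalizer (W T : Set G) →
            y ∈ (T : Subgroup G) := by
          intro T y hyD hyN
          obtain ⟨T₁, hT₁⟩ := (hproper2 _ (hWnorm T)).exists_le_sylow
          have hsub : D ∩ ((T : Subgroup G) : Set G) ⊆ D ∩ ((T₁ : Subgroup G) : Set G) := by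
            intro z hz
            exact ⟨hz.1, hT₁ (subset_closure ⟨hz.1, hTleN T hz.2⟩)⟩
          have hceq : D ∩ ((T : Subgroup G) : Set G) = D ∩ ((T₁ : Subgroup G) : Set G) :=
            Set.eq_of_subset_of_ncard_le hsub (le_of_eq (hDT_ncard T₁ T)) (Set.toFinite _)
          have hyT₁ : y ∈ D ∩ ((T₁ : Subgroup G) : Set G) :=
            ⟨hyD, hT₁ (subset_closure ⟨hyD, hyN⟩)⟩
          rw [← hceq] at hyT₁
          exact hyT₁.2
        have hWeq : ∀ T T' : Sylow 2 G, W T ≤ W T' → W T = W T' := by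
          intro T T' hle
          refine eq_of_le_of_card_le hle ?_
          obtain ⟨g, rfl⟩ := MulAction.exists_smul_eq G T T'
          rw [hWconj g T]
          exact le_of_eq (Nat.card_congr
            (Subgroup.equivMapOfInjective (W T) _ (MulAut.conj g).injective).toEquiv).symm
        have hcommon : ∀ y ∈ D, ∀ z ∈ D, ∃ T : Sylow 2 G,
            y ∈ (T : Subgroup G) ∧ z ∈ (T : Subgroup G) := by
          intro y hy z hz
          obtain ⟨T, hT⟩ := (hpair y hy z hz).exists_le_sylow
          exact ⟨T, hT (subset_closure (Set.mem_insert _ _)),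
            hT (subset_closure (Set.mem_insert_iff.mpr (Or.inr rfl)))⟩
        obtain ⟨T₀⟩ : Nonempty (Sylow 2 G) := Sylow.nonempty
        have hyW : ∃ y ∈ D, y ∉ W T₀ := by
          by_contra hc
          push_neg at hc
          have hh : closure D ≤ W T₀ := (closure_le _).mpr hc
          rw [hgen] at hh
          exact hWtop' T₀ (top_le_iff.mp hh)
        obtain ⟨y, hyD, hyWT₀⟩ := hyW
        obtain ⟨dd, hdd⟩ := hDT_ne T₀
        obtain ⟨T₂, hyT₂, hddT₂⟩ := hcommon y hyD dd hdd.1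
        have hT₂T₀ : W T₂ ≠ W T₀ := by
          intro hc
          exact hyWT₀ (hc ▸ hDinW T₂ ⟨hyD, hyT₂⟩)
        set P : Set (Sylow 2 G × Sylow 2 G) := {p | W p.1 ≠ W p.2} with hPdef
        set f : Sylow 2 G × Sylow 2 G → ℕ :=
          fun p => (D ∩ ((p.1 : Subgroup G) : Set G) ∩ ((p.2 : Subgroup G) : Set G)).ncard
          with hfdef
        obtain ⟨⟨T, T'⟩, hPmem, hmaxw⟩ :=
          Set.Finite.exists_maximalFor f P (Set.toFinite _) ⟨(T₂, T₀), hT₂T₀⟩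
        have hmax' : ∀ q ∈ P, f q ≤ f (T, T') := by
          intro q hq
          rcases le_total (f q) (f (T, T')) with h | h
          · exact h
          · exact hmaxw hq h
        have hm1 : 1 ≤ f (T, T') := by
          refine le_trans ?_ (hmax' (T₂, T₀) hT₂T₀)
          have : (D ∩ ((T₂ : Subgroup G) : Set G) ∩ ((T₀ : Subgroup G) : Set G)).Nonempty :=
            ⟨dd, ⟨hdd.1, hddT₂⟩, hdd.2⟩
          have := (Set.ncard_pos (Set.toFinite _)).mpr this
          simpa [hfdef, Nat.lt_iff_add_one_le] using this
        set A : Set G := D ∩ ((T : Subgroup G) : Set G) ∩ ((T' : Subgroup G) : Set G) with hAdef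
        set R : Subgroup G := closure A with hRdef
        have hAR : A ⊆ (R : Set G) := subset_closure
        have hRT : R ≤ (T : Subgroup G) := (closure_le _).mpr (fun x hx => hx.1.2)
        have hRT' : R ≤ (T' : Subgroup G) := (closure_le _).mpr (fun x hx => hx.2)
        have hRWT : R ≤ W T := closure_mono (fun x hx => ⟨hx.1.1, hx.1.2⟩)
        have hRWT' : R ≤ W T' := closure_mono (fun x hx => ⟨hx.1.1, hx.2⟩)
        have hWTT' : W T ≠ W T' := hPmem
        have hRneWT : R ≠ W T := by
          intro hc
          exact hWTT' (hWeq T T' (hc ▸ hRWT'))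
        have hRneWT' : R ≠ W T' := by
          intro hc
          exact hWTT' (hWeq T' T (hc ▸ hRWT)).symm
        have hAne : A.Nonempty := by
          refine (Set.ncard_pos (Set.toFinite _)).mp ?_
          have : f (T, T') = A.ncard := by simp [hfdef, hAdef]
          omega
        have hRbot : R ≠ ⊥ := by
          obtain ⟨a, ha⟩ := hAne
          intro hc
          have haR : a ∈ R := hAR ha
          rw [hc, Subgroup.mem_bot] at haR
          exact hne1 a ha.1.1 haR
        have hDR : D ∩ (R : Set G) = A := by
          apply Set.Subset.antisymm
          · intro x hx
            exact ⟨⟨hx.1, hRT hx.2⟩, hRT' hx.2⟩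
          · intro x hx
            exact ⟨hx.1.1, hAR hx⟩
        have hclDR : closure (D ∩ (R : Set G)) = R := by rw [hDR]
        have hNRtop : normalizer (R : Set G) ≠ ⊤ := by
          intro hc
          exact hnorm ⟨R, normalizer_eq_top_iff.mp hc, hRbot, (hWp T).to_le hRWT⟩
        obtain ⟨Ts, hTs⟩ := (hproper2 _ hNRtop).exists_le_sylow
        have hz : ∀ z, z ∈ D → z ∈ normalizer (R : Set G) →
            z ∈ D ∩ ((Ts : Subgroup G) : Set G) := by
          intro z h1 h2
          exact ⟨h1, hTs (subset_closure ⟨h1, h2⟩)⟩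
        have happly : ∀ T'' : Sylow 2 G, R ≤ W T'' → R ≠ W T'' →
            ∃ d, d ∈ D ∧ d ∈ W T'' ∧ d ∉ R ∧ d ∈ normalizer (R : Set G) := by
          intro T'' hle hne
          have harg1 : ∀ (g : (W T'' : Subgroup G)), ∀ x ∈ ((W T'').subtype ⁻¹' D),
              g * x * g⁻¹ ∈ ((W T'').subtype ⁻¹' D) := by
            intro g x hx
            exact hinv (g : G) (x : G) hx
          have harg2 : closure ((W T'').subtype ⁻¹' D) = ⊤ := by
            apply map_injective (W T'').subtype_injective
            have himg : (W T'').subtype ⁻¹' D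
                = (W T'').subtype ⁻¹' (D ∩ ((W T'') : Set G)) := by
              ext z
              simp [Subgroup.coe_subtype, z.2]
            rw [himg, map_closure_subtype _ _ Set.inter_subset_right, map_subtype_top]
            have hset : D ∩ ((W T'') : Set G) = D ∩ ((T'' : Subgroup G) : Set G) :=
              Set.Subset.antisymm (fun x hx => ⟨hx.1, hWle T'' hx.2⟩)
                (fun x hx => ⟨hx.1, hDinW T'' hx⟩)
            rw [hset]
          have harg3 : closure (((W T'').subtype ⁻¹' D)
              ∩ ((R.subgroupOf (W T'')) : Set (W T''))) = R.subgroupOf (W T'') := by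
            apply map_injective (W T'').subtype_injective
            have himg2 : ((W T'').subtype ⁻¹' D) ∩ ((R.subgroupOf (W T'')) : Set (W T''))
                = (W T'').subtype ⁻¹' (D ∩ (R : Set G)) := by
              ext z
              simp [Subgroup.coe_subtype, mem_subgroupOf]
            rw [himg2, map_closure_subtype _ _ (fun x hx => hle hx.2), hclDR,
              subgroupOf_map_subtype, inf_of_le_left hle]
          have harg4 : R.subgroupOf (W T'') ≠ ⊤ := by
            intro hc
            apply hne
            have hcc := congrArg (map (W T'').subtype) hc
            rw [subgroupOf_map_subtype, inf_of_le_left hle, map_subtype_top] at hcc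
            exact hcc
          obtain ⟨d', hd'X, hd'R, hd'N⟩ := lemP (Nat.card (W T'')) (W T'') le_rfl (hWp T'')
            ((W T'').subtype ⁻¹' D) harg1 harg2 (R.subgroupOf (W T'')) harg3 harg4
          exact ⟨(d' : G), hd'X, d'.2, fun hc => hd'R (mem_subgroupOf.mpr hc),
            normalizer_lift hle hd'N⟩
        obtain ⟨d₁, hd₁D, hd₁W, hd₁R, hd₁N⟩ := happly T hRWT hRneWT
        obtain ⟨d₂, hd₂D, hd₂W, hd₂R, hd₂N⟩ := happly T' hRWT' hRneWT'
        by_cases hcase : W Ts = W T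
        · have hd₂WT : d₂ ∈ W Ts := hDinW Ts (hz d₂ hd₂D hd₂N)
          rw [hcase] at hd₂WT
          have hd₂A : d₂ ∈ A := ⟨⟨hd₂D, hWle T hd₂WT⟩, hWle T' hd₂W⟩
          exact hd₂R (hAR hd₂A)
        · have hq : (T, Ts) ∈ P := fun hc => hcase hc.symm
          have hAsub : insert d₁ A ⊆ D ∩ ((T : Subgroup G) : Set G)
              ∩ ((Ts : Subgroup G) : Set G) := by
            intro x hx
            rcases Set.mem_insert_iff.mp hx with rfl | hxA
            · exact ⟨⟨hd₁D, hWle T hd₁W⟩, (hz x hd₁D hd₁N).2⟩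
            · exact ⟨⟨hxA.1.1, hxA.1.2⟩, (hz x hxA.1.1 (le_normalizer (hAR hxA))).2⟩
          have hcard1 : A.ncard + 1
              ≤ (D ∩ ((T : Subgroup G) : Set G) ∩ ((Ts : Subgroup G) : Set G)).ncard := by
            have h1 : (insert d₁ A).ncard = A.ncard + 1 :=
              Set.ncard_insert_of_notMem (fun hc => hd₁R (hAR hc)) (Set.toFinite _)
            calc A.ncard + 1 = (insert d₁ A).ncard := h1.symm
              _ ≤ _ := Set.ncard_le_ncard hAsub (Set.toFinite _)
          have hle' := hmax' (T, Ts) hq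
          have hfT : f (T, T') = A.ncard := by simp [hfdef, hAdef]
          have hfTs : f (T, Ts)
              = (D ∩ ((T : Subgroup G) : Set G) ∩ ((Ts : Subgroup G) : Set G)).ncard := by
            simp [hfdef]
          omega


end BSaux



/-- The 2-core `O₂(G)`: the join of all normal 2-subgroups of `G`. -/
def twoCore (G : Type) [Group G] : Subgroup G :=
  ⨆ (N : Subgroup G) (_ : N.Normal) (_ : IsPGroup 2 N), N

theorem statement_17 (G : Type) [Group G] [Finite G] (x : G) (hx : orderOf x = 2)
    (h : ∀ g : G, IsPGroup 2 (Subgroup.closure ({x, g * x * g⁻¹} : Set G))) :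
    Group.IsNilpotent (Subgroup.normalClosure ({x} : Set G)) ∧ x ∈ twoCore G := by
  haveI : Fact (Nat.Prime 2) := ⟨Nat.prime_two⟩
  set D : Set G := {y | ∃ g : G, g * x * g⁻¹ = y} with hDdef
  have hinv : ∀ g : G, ∀ d ∈ D, g * d * g⁻¹ ∈ D := by
    rintro g d ⟨c, rfl⟩
    exact ⟨g * c, by group⟩
  have hord : ∀ d ∈ D, orderOf d = 2 := by
    rintro d ⟨c, rfl⟩
    have h1 := orderOf_injective (MulAut.conj c).toMonoidHom (MulAut.conj c).injective x
    exact h1.trans hx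
  have hpairD : ∀ a ∈ D, ∀ b ∈ D, IsPGroup 2 (Subgroup.closure {a, b}) := by
    rintro a ⟨g₁, rfl⟩ b ⟨g₂, rfl⟩
    have hmap := (h (g₁⁻¹ * g₂)).map (MulAut.conj g₁).toMonoidHom
    rw [MonoidHom.map_closure, Set.image_pair] at hmap
    have e1 : (MulAut.conj g₁).toMonoidHom x = g₁ * x * g₁⁻¹ := rfl
    have e2 : (MulAut.conj g₁).toMonoidHom ((g₁⁻¹ * g₂) * x * (g₁⁻¹ * g₂)⁻¹)
        = g₂ * x * g₂⁻¹ := by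
      show g₁ * ((g₁⁻¹ * g₂) * x * (g₁⁻¹ * g₂)⁻¹) * g₁⁻¹ = g₂ * x * g₂⁻¹
      group
    rw [e1, e2] at hmap
    exact hmap
  have hDeq : Subgroup.normalClosure ({x} : Set G) = Subgroup.closure D := by
    have hset : Group.conjugatesOfSet ({x} : Set G) = D := by
      ext y
      rw [Group.mem_conjugatesOfSet_iff]
      constructor
      · rintro ⟨a, ha, hconj⟩
        rw [Set.mem_singleton_iff] at ha
        subst ha
        obtain ⟨c, hc⟩ := isConj_iff.mp hconj
        exact ⟨c, hc⟩
      · rintro ⟨c, rfl⟩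
        exact ⟨x, rfl, isConj_iff.mpr ⟨c, rfl⟩⟩
    rw [Subgroup.normalClosure, hset]
  have hmain : IsPGroup 2 (Subgroup.closure D) :=
    BSaux.main (Nat.card G) G le_rfl D hinv hord hpairD
  have hpN : IsPGroup 2 (Subgroup.normalClosure ({x} : Set G)) := by
    rw [hDeq]; exact hmain
  constructor
  · exact hpN.isNilpotent
  · have hmem : x ∈ Subgroup.normalClosure ({x} : Set G) :=
      Subgroup.subset_normalClosure (Set.mem_singleton x)
    have hle : Subgroup.normalClosure ({x} : Set G) ≤ twoCore G := by
      refine le_iSup_of_le (Subgroup.normalClosure ({x} : Set G)) ?_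
      refine le_iSup_of_le Subgroup.normalClosure_normal ?_
      exact le_iSup_of_le hpN le_rfl
    exact hle hmem
end
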